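/- arXiv:2509.11331 — 3 statements merged into one kernel-verified Lean document; each statement's English description precedes it below -/
import Mathlib

section
/- Let G be a quasi-acyclic 2-path-bounded oriented graph without multiple edges and without triangles. Then η(G) ≥ 𝔯𝔥(G) + 𝔏(G). -/
/-- An oriented graph: finite nonempty sets of vertices and edges with
origin and tail maps. -/
structure OrientedGraph where
  V : Type
  E : Type
  [fintypeV : Fintype V]
  [fintypeE : Fintype E]
  [nonemptyV : Nonempty V]
  [nonemptyE : Nonempty E]
  o : E → V
  t : E → V

attribute [instance] OrientedGraph.fintypeV OrientedGraph.fintypeE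
  OrientedGraph.nonemptyV OrientedGraph.nonemptyE

namespace OrientedGraph

variable (G : OrientedGraph)

/-- `G.IsPath p u v` : the edge sequence `p` is a path from `u` to `v`
(consecutive edges are composable; paths of length 0 at any vertex are allowed). -/
def IsPath (p : List G.E) (u v : G.V) : Prop :=
  List.Chain' (fun e f => G.t e = G.o f) p ∧
  ((p = [] ∧ u = v) ∨
    ∃ h : p ≠ [], u = G.o (p.head h) ∧ v = G.t (p.getLast h))

/-- The label of an edge sequence: the product of the labels of its edges
(the empty sequence maps to `1`). -/
def labelProd {M : Type} [Monoid M] (l : G.E → M) (s : List G.E) : M :=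
  (s.map l).prod

/-- The diagram `(G, l)` is commutative: any two paths with the same origin and
the same tail have equal labels. -/
def IsCommutative {M : Type} [Monoid M] (l : G.E → M) : Prop :=
  ∀ (u v : G.V) (p₁ p₂ : List G.E),
    G.IsPath p₁ u v → G.IsPath p₂ u v → G.labelProd l p₁ = G.labelProd l p₂

/-- A complete system of relations for `G`: for every monoid `M` and every
labeling `l : E → M`, the diagram `(G, l)` is commutative iff all relations hold. -/
def IsComplete (R : Finset (List G.E × List G.E)) : Prop :=
  ∀ (M : Type) [Monoid M], ∀ l : G.E → M,
    G.IsCommutative l ↔ ∀ r ∈ R, G.labelProd l r.1 = G.labelProd l r.2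

/-- A minimal complete system of relations: no proper subset is complete. -/
def IsMinimalComplete (R : Finset (List G.E × List G.E)) : Prop :=
  G.IsComplete R ∧ ∀ R' : Finset (List G.E × List G.E), R' ⊂ R → ¬ G.IsComplete R'

/-- The commutativity rank `η(G)`: the minimal cardinality of a complete
system of relations for `G`. -/
noncomputable def eta : ℕ :=
  sInf {n : ℕ | ∃ R : Finset (List G.E × List G.E), G.IsComplete R ∧ R.card = n}

/-- `S'` is obtained from `S` by one multiplication. -/
def MulStep (S S' : Set (List G.E)) : Prop :=
  ∃ s ∈ S, ∃ s' ∈ S, S' = S ∪ {s ++ s'}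

/-- `G.mCost S S'` : the minimal number of multiplications needed to obtain `S'`
from `S` (`⊤` if impossible). -/
noncomputable def mCost (S S' : Set (List G.E)) : ℕ∞ :=
  sInf {k : ℕ∞ | ∃ n : ℕ, k = n ∧ ∃ f : ℕ → Set (List G.E),
    f 0 = S ∧ f n = S' ∧ ∀ i < n, G.MulStep (f i) (f (i + 1))}

/-- `S_R`: the set of all edge sequences appearing in the relations of `R`. -/
def relSet (R : Finset (List G.E × List G.E)) : Set (List G.E) :=
  {s | ∃ r ∈ R, s = r.1 ∨ s = r.2}

/-- `ℰ`: the empty sequence together with all one-edge sequences. -/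
def baseSet : Set (List G.E) :=
  {s | s = [] ∨ ∃ e : G.E, s = [e]}

/-- `m(R)`: the minimal number of multiplications needed to build all sequences
appearing in `R`, starting from `ℰ`. -/
noncomputable def mRel (R : Finset (List G.E × List G.E)) : ℕ∞ :=
  sInf {k : ℕ∞ | ∃ S : Set (List G.E), G.relSet R ⊆ S ∧ k = G.mCost G.baseSet S}

/-- The multiplication rank `ν(G)`. -/
noncomputable def nu : ℕ∞ :=
  sInf {k : ℕ∞ | ∃ R : Finset (List G.E × List G.E), G.IsComplete R ∧ k = G.mRel R}

/-- A 4-tuple of edges `(a, b, c, d)` forms a rhomboid. -/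
def IsRhomboid (r : G.E × G.E × G.E × G.E) : Prop :=
  G.o r.1 = G.o r.2.2.1 ∧ G.t r.2.1 = G.t r.2.2.2 ∧
  G.t r.1 = G.o r.2.1 ∧ G.t r.2.2.1 = G.o r.2.2.2 ∧
  G.o r.1 ≠ G.t r.1 ∧ G.o r.1 ≠ G.o r.2.2.2 ∧ G.o r.1 ≠ G.t r.2.2.2 ∧
  G.t r.1 ≠ G.o r.2.2.2 ∧ G.t r.1 ≠ G.t r.2.2.2 ∧ G.o r.2.2.2 ≠ G.t r.2.2.2

/-- Two rhomboids `(a, b, c, d)` and `(a', b', c', d')` are disjoint. -/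
def RhDisjoint (r r' : G.E × G.E × G.E × G.E) : Prop :=
  (r.1 ≠ r'.1 ∨ r.2.1 ≠ r'.2.1) ∧
  (r.1 ≠ r'.2.2.1 ∨ r.2.1 ≠ r'.2.2.2) ∧
  (r.2.2.1 ≠ r'.2.2.1 ∨ r.2.2.2 ≠ r'.2.2.2) ∧
  (r.2.2.1 ≠ r'.1 ∨ r.2.2.2 ≠ r'.2.1)

/-- `𝔯𝔥(G)`: the maximal cardinality of a family of pairwise disjoint rhomboids in `G`. -/
noncomputable def rhNum : ℕ :=
  sSup {n : ℕ | ∃ F : Finset (G.E × G.E × G.E × G.E),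
    (∀ r ∈ F, G.IsRhomboid r) ∧
    (∀ r ∈ F, ∀ r' ∈ F, r ≠ r' → G.RhDisjoint r r') ∧ F.card = n}

/-- `𝔏(G)`: the number of loops of `G`. -/
noncomputable def loopCount : ℕ :=
  Nat.card {e : G.E // G.o e = G.t e}

/-- `G` is quasi-acyclic: no directed cycle visiting two or more distinct vertices. -/
def QuasiAcyclic : Prop :=
  ∀ u v : G.V, u ≠ v →
    ∀ p q : List G.E, G.IsPath p u v → G.IsPath q v u → False

/-- `G` is 2-path-bounded: every oriented path avoiding loop edges has length at most 2. -/
def TwoPathBounded : Prop :=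
  ∀ (p : List G.E) (u v : G.V), G.IsPath p u v →
    (∀ e ∈ p, G.o e ≠ G.t e) → p.length ≤ 2

/-- `G` has a pair of multiple edges. -/
def HasMultipleEdges : Prop :=
  ∃ e e' : G.E, e ≠ e' ∧ G.t e = G.t e' ∧ G.o e = G.o e' ∧ G.t e ≠ G.o e

/-- `G` has a triangle. -/
def HasTriangle : Prop :=
  ∃ a b c : G.E, G.o a = G.o b ∧ G.t b = G.o c ∧ G.t c = G.t a ∧
    G.o a ≠ G.t a ∧ G.o b ≠ G.t b ∧ G.o c ≠ G.t c

/-- `G` has no loops. -/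
def NoLoops : Prop := ∀ e : G.E, G.o e ≠ G.t e

/-- Every edge occurring on either side of the relation `r` is a loop. -/
def AllLoops (r : List G.E × List G.E) : Prop :=
  (∀ e ∈ r.1, G.o e = G.t e) ∧ (∀ e ∈ r.2, G.o e = G.t e)

/-- Both sides of the relation `r` contain at least one non-loop edge. -/
def BothSidesNonLoop (r : List G.E × List G.E) : Prop :=
  (∃ e ∈ r.1, G.o e ≠ G.t e) ∧ (∃ e ∈ r.2, G.o e ≠ G.t e)

end OrientedGraph

/-- The triploid `T(n₁, n₂, n₃, n₀, e)`. -/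
def Triploid (n₁ n₂ n₃ n₀ e : ℕ) (hn₁ : 0 < n₁) (he : n₂ * (n₁ + n₃) ≤ e)
    (he₀ : 0 < e) : OrientedGraph where
  V := Fin n₀ ⊕ Fin n₁ ⊕ Fin n₂ ⊕ Fin n₃
  E := (Fin n₁ × Fin n₂) ⊕ (Fin n₂ × Fin n₃) ⊕ Fin (e - n₂ * (n₁ + n₃))
  nonemptyV := ⟨Sum.inr (Sum.inl ⟨0, hn₁⟩)⟩
  nonemptyE := by
    by_cases h : n₂ * (n₁ + n₃) < e
    · exact ⟨Sum.inr (Sum.inr ⟨0, by omega⟩)⟩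
    · have h2 : 0 < n₂ := by
        rcases Nat.eq_zero_or_pos n₂ with h0 | h0
        · exfalso; subst h0; simp at h; omega
        · exact h0
      exact ⟨Sum.inl (⟨0, hn₁⟩, ⟨0, h2⟩)⟩
  o := Sum.elim (fun p => Sum.inr (Sum.inl p.1))
        (Sum.elim (fun p => Sum.inr (Sum.inr (Sum.inl p.1)))
          (fun _ => Sum.inr (Sum.inl ⟨0, hn₁⟩)))
  t := Sum.elim (fun p => Sum.inr (Sum.inr (Sum.inl p.2)))
        (Sum.elim (fun p => Sum.inr (Sum.inr (Sum.inr p.2)))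
          (fun _ => Sum.inr (Sum.inl ⟨0, hn₁⟩)))

section Aux
attribute [local instance] Classical.propDecidable

namespace OrientedGraph

variable (G : OrientedGraph)

theorem isPath_nil {u v : G.V} : G.IsPath [] u v ↔ u = v := by
  constructor
  · rintro ⟨-, h | ⟨h, -⟩⟩
    · exact h.2
    · exact absurd rfl h
  · rintro rfl
    exact ⟨List.isChain_nil, Or.inl ⟨rfl, rfl⟩⟩

theorem isPath_cons {e : G.E} {p : List G.E} {u v : G.V} :
    G.IsPath (e :: p) u v ↔ u = G.o e ∧ G.IsPath p (G.t e) v := by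
  cases p with
  | nil =>
    constructor
    · rintro ⟨-, (⟨h, -⟩ | ⟨hne, h1, h2⟩)⟩
      · simp at h
      · simp only [List.head_cons] at h1
        refine ⟨h1, G.isPath_nil.2 ?_⟩
        simpa using h2.symm
    · rintro ⟨h1, h2⟩
      have h3 := G.isPath_nil.1 h2
      exact ⟨List.isChain_singleton e, Or.inr ⟨by simp, by simpa using h1,
        by simpa using h3.symm⟩⟩
  | cons f p' =>
    constructor
    · rintro ⟨hc, (⟨h, -⟩ | ⟨h, h1, h2⟩)⟩
      · simp at h
      · rw [List.Chain', List.isChain_cons_cons] at hc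
        refine ⟨by simpa using h1, hc.2, Or.inr ⟨by simp, by simp [hc.1], ?_⟩⟩
        simpa [List.getLast_cons] using h2
    · rintro ⟨h1, hc, (⟨h, -⟩ | ⟨h, h2, h3⟩)⟩
      · simp at h
      · refine ⟨List.isChain_cons_cons.2 ⟨by simpa using h2, hc⟩,
          Or.inr ⟨by simp, by simpa using h1, ?_⟩⟩
        simpa [List.getLast_cons] using h3

theorem isPath_singleton (e : G.E) : G.IsPath [e] (G.o e) (G.t e) := by
  rw [isPath_cons, isPath_nil]; exact ⟨rfl, rfl⟩

theorem isPath_pair {x y : G.E} (h : G.t x = G.o y) :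
    G.IsPath [x, y] (G.o x) (G.t y) := by
  rw [isPath_cons, isPath_cons, isPath_nil]
  exact ⟨rfl, h, rfl⟩

theorem isPath_loop {e : G.E} (h : G.o e = G.t e) :
    G.IsPath [e] (G.o e) (G.o e) := by
  nth_rewrite 2 [h]; exact G.isPath_singleton e

/-- loop-free core of an edge sequence -/
noncomputable def core (s : List G.E) : List G.E :=
  s.filter (fun e => decide (G.o e ≠ G.t e))

theorem mem_core {s : List G.E} {e : G.E} :
    e ∈ G.core s ↔ e ∈ s ∧ G.o e ≠ G.t e := by
  simp [core]

theorem core_isPath {p : List G.E} {u v : G.V} (h : G.IsPath p u v) :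
    G.IsPath (G.core p) u v := by
  induction p generalizing u with
  | nil => simpa [core] using h
  | cons e p ih =>
    rw [isPath_cons] at h
    obtain ⟨rfl, hp⟩ := h
    by_cases hl : G.o e = G.t e
    · have : G.core (e :: p) = G.core p := by simp [core, hl]
      rw [this, hl]; exact ih hp
    · have : G.core (e :: p) = e :: G.core p := by simp [core, hl]
      rw [this, isPath_cons]; exact ⟨rfl, ih hp⟩

theorem core_loopFree {s : List G.E} {e : G.E} (h : e ∈ G.core s) :
    G.o e ≠ G.t e := (G.mem_core.1 h).2

theorem labelProd_core {M : Type} [Monoid M] {l : G.E → M}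
    (hl : ∀ e, G.o e = G.t e → l e = 1) (s : List G.E) :
    G.labelProd l s = G.labelProd l (G.core s) := by
  induction s with
  | nil => rfl
  | cons e s ih =>
    by_cases h : G.o e = G.t e
    · have hc : G.core (e :: s) = G.core s := by simp [core, h]
      rw [hc, ← ih]
      simp [labelProd, hl e h]
    · have hc : G.core (e :: s) = e :: G.core s := by simp [core, h]
      rw [hc]
      simp only [labelProd, List.map_cons, List.prod_cons] at ih ⊢
      rw [ih]

theorem labelProd_nil {M : Type} [Monoid M] (l : G.E → M) :
    G.labelProd l [] = 1 := rfl

theorem labelProd_singleton {M : Type} [Monoid M] (l : G.E → M) (x : G.E) :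
    G.labelProd l [x] = l x := by simp [labelProd]

theorem labelProd_pair {M : Type} [Monoid M] (l : G.E → M) (x y : G.E) :
    G.labelProd l [x, y] = l x * l y := by simp [labelProd]

theorem isPath_pair_elim {x y : G.E} {u v : G.V} (h : G.IsPath [x, y] u v) :
    u = G.o x ∧ G.t x = G.o y ∧ G.t y = v := by
  rw [isPath_cons, isPath_cons, isPath_nil] at h
  exact ⟨h.1, h.2.1, h.2.2⟩

theorem core_cases (hqa : G.QuasiAcyclic) (hpb : G.TwoPathBounded)
    (hme : ¬ G.HasMultipleEdges) (htr : ¬ G.HasTriangle)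
    {p₁ p₂ : List G.E} {u v : G.V} (h₁ : G.IsPath p₁ u v) (h₂ : G.IsPath p₂ u v) :
    G.core p₁ = G.core p₂ ∨
    ∃ x y z w, G.core p₁ = [x, y] ∧ G.core p₂ = [z, w] ∧
      G.t x = G.o y ∧ G.t z = G.o w ∧ G.o x = u ∧ G.o z = u ∧ G.t y = v ∧ G.t w = v ∧
      G.o x ≠ G.t x ∧ G.o y ≠ G.t y ∧ G.o z ≠ G.t z ∧ G.o w ≠ G.t w := by
  have hc1 : G.IsPath (G.core p₁) u v := G.core_isPath h₁
  have hc2 : G.IsPath (G.core p₂) u v := G.core_isPath h₂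
  have hl1 : (G.core p₁).length ≤ 2 :=
    hpb _ _ _ hc1 (fun e he => G.core_loopFree he)
  have hl2 : (G.core p₂).length ≤ 2 :=
    hpb _ _ _ hc2 (fun e he => G.core_loopFree he)
  rcases e1 : G.core p₁ with _ | ⟨x, _ | ⟨y, _ | ⟨x3, t1⟩⟩⟩ <;>
    rcases e2 : G.core p₂ with _ | ⟨z, _ | ⟨w, _ | ⟨z3, t2⟩⟩⟩ <;>
      rw [e1] at hc1 hl1 <;> rw [e2] at hc2 hl2
  · exact Or.inl rfl
  · -- nil vs [z]
    exfalso
    have huv : u = v := G.isPath_nil.1 hc1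
    rw [isPath_cons, isPath_nil] at hc2
    have hz : G.o z ≠ G.t z := G.core_loopFree (e2 ▸ (by simp : z ∈ [z]))
    exact hz (by rw [← hc2.1, huv, ← hc2.2])
  · -- nil vs [z, w]
    exfalso
    have huv : u = v := G.isPath_nil.1 hc1
    obtain ⟨hu, hm, hv⟩ := G.isPath_pair_elim hc2
    have hz : G.o z ≠ G.t z := G.core_loopFree (e2 ▸ (by simp : z ∈ [z, w]))
    refine hqa u (G.t z) (by rw [hu]; exact hz) [z] [w] ?_ ?_
    · rw [hu]; exact G.isPath_singleton z
    · rw [hm]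
      have : G.t w = u := by rw [hv, huv]
      rw [← this]; exact G.isPath_singleton w
  · simp at hl2
  · -- [x] vs nil
    exfalso
    have huv : u = v := G.isPath_nil.1 hc2
    rw [isPath_cons, isPath_nil] at hc1
    have hx : G.o x ≠ G.t x := G.core_loopFree (e1 ▸ (by simp : x ∈ [x]))
    exact hx (by rw [← hc1.1, huv, ← hc1.2])
  · -- [x] vs [z]
    rw [isPath_cons, isPath_nil] at hc1 hc2
    have hx : G.o x ≠ G.t x := G.core_loopFree (e1 ▸ (by simp : x ∈ [x]))
    by_cases hxz : x = z
    · exact Or.inl (by rw [hxz])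
    · exact absurd ⟨x, z, hxz, by rw [hc1.2, hc2.2], by rw [← hc1.1, ← hc2.1],
        fun hh => hx hh.symm⟩ hme
  · -- [x] vs [z, w]
    exfalso
    rw [isPath_cons, isPath_nil] at hc1
    obtain ⟨hu, hm, hv⟩ := G.isPath_pair_elim hc2
    have hx : G.o x ≠ G.t x := G.core_loopFree (e1 ▸ (by simp : x ∈ [x]))
    have hz : G.o z ≠ G.t z := G.core_loopFree (e2 ▸ (by simp : z ∈ [z, w]))
    have hw : G.o w ≠ G.t w := G.core_loopFree (e2 ▸ (by simp : w ∈ [z, w]))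
    exact htr ⟨x, z, w, by rw [← hc1.1, hu], hm, by rw [hv, hc1.2], hx, hz, hw⟩
  · simp at hl2
  · -- [x, y] vs nil
    exfalso
    have huv : u = v := G.isPath_nil.1 hc2
    obtain ⟨hu, hm, hv⟩ := G.isPath_pair_elim hc1
    have hx : G.o x ≠ G.t x := G.core_loopFree (e1 ▸ (by simp : x ∈ [x, y]))
    refine hqa u (G.t x) (by rw [hu]; exact hx) [x] [y] ?_ ?_
    · rw [hu]; exact G.isPath_singleton x
    · rw [hm]
      have : G.t y = u := by rw [hv, huv]
      rw [← this]; exact G.isPath_singleton y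
  · -- [x, y] vs [z]
    exfalso
    rw [isPath_cons, isPath_nil] at hc2
    obtain ⟨hu, hm, hv⟩ := G.isPath_pair_elim hc1
    have hx : G.o x ≠ G.t x := G.core_loopFree (e1 ▸ (by simp : x ∈ [x, y]))
    have hy : G.o y ≠ G.t y := G.core_loopFree (e1 ▸ (by simp : y ∈ [x, y]))
    have hz : G.o z ≠ G.t z := G.core_loopFree (e2 ▸ (by simp : z ∈ [z]))
    exact htr ⟨z, x, y, by rw [← hc2.1, hu], hm, by rw [hv, hc2.2], hz, hx, hy⟩
  · -- [x, y] vs [z, w]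
    obtain ⟨hu1, hm1, hv1⟩ := G.isPath_pair_elim hc1
    obtain ⟨hu2, hm2, hv2⟩ := G.isPath_pair_elim hc2
    exact Or.inr ⟨x, y, z, w, rfl, rfl, hm1, hm2, hu1.symm, hu2.symm, hv1, hv2,
      G.core_loopFree (e1 ▸ (by simp : x ∈ [x, y])),
      G.core_loopFree (e1 ▸ (by simp : y ∈ [x, y])),
      G.core_loopFree (e2 ▸ (by simp : z ∈ [z, w])),
      G.core_loopFree (e2 ▸ (by simp : w ∈ [z, w]))⟩
  · simp at hl2
  · simp at hl1
  · simp at hl1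
  · simp at hl1
  · simp at hl1

theorem isCommutative_of (hqa : G.QuasiAcyclic) (hpb : G.TwoPathBounded)
    (hme : ¬ G.HasMultipleEdges) (htr : ¬ G.HasTriangle)
    {M : Type} [Monoid M] {l : G.E → M}
    (hloop : ∀ e, G.o e = G.t e → l e = 1)
    (hside : ∀ x y z w : G.E, G.t x = G.o y → G.t z = G.o w → G.o x = G.o z →
      G.t y = G.t w → G.o x ≠ G.t x → G.o y ≠ G.t y → G.o z ≠ G.t z → G.o w ≠ G.t w →
      l x * l y = l z * l w) :
    G.IsCommutative l := by
  intro u v p₁ p₂ h₁ h₂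
  rw [G.labelProd_core hloop p₁, G.labelProd_core hloop p₂]
  rcases G.core_cases hqa hpb hme htr h₁ h₂ with h | ⟨x, y, z, w, e1, e2,
    hm1, hm2, hu1, hu2, hv1, hv2, hx, hy, hz, hw⟩
  · rw [h]
  · rw [e1, e2, G.labelProd_pair, G.labelProd_pair]
    exact hside x y z w hm1 hm2 (by rw [hu1, hu2]) (by rw [hv1, hv2]) hx hy hz hw

/-! ### The flat test monoid -/

inductive Flat (E C : Type) where
  | one : Flat E C
  | letter : E → Flat E C
  | col : C → Flat E C
  | zero : Flat E C

variable {C : Type}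

noncomputable def flatMul (f : G.E → G.E → C) :
    Flat G.E C → Flat G.E C → Flat G.E C
  | .one, x => x
  | .letter x, .one => .letter x
  | .letter x, .letter y => if G.t x = G.o y then .col (f x y) else .zero
  | .letter _, .col _ => .zero
  | .letter _, .zero => .zero
  | .col c, .one => .col c
  | .col _, .letter _ => .zero
  | .col _, .col _ => .zero
  | .col _, .zero => .zero
  | .zero, .one => .zero
  | .zero, .letter _ => .zero
  | .zero, .col _ => .zero
  | .zero, .zero => .zero

theorem flatMul_one_left (f : G.E → G.E → C) (a : Flat G.E C) :
    G.flatMul f .one a = a := by cases a <;> rfl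

theorem flatMul_one_right (f : G.E → G.E → C) (a : Flat G.E C) :
    G.flatMul f a .one = a := by cases a <;> rfl

theorem flatMul_assoc (f : G.E → G.E → C) (a b c : Flat G.E C) :
    G.flatMul f (G.flatMul f a b) c = G.flatMul f a (G.flatMul f b c) := by
  cases a <;> cases b <;> cases c <;>
    (try rfl) <;> simp only [flatMul] <;> split_ifs <;> simp only [flatMul] <;> rfl

def FlatM (G : OrientedGraph) {C : Type} (f : G.E → G.E → C) : Type := Flat G.E C

noncomputable instance instMonoidFlatM (f : G.E → G.E → C) : Monoid (G.FlatM f) where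
  mul := G.flatMul f
  one := Flat.one
  one_mul := G.flatMul_one_left f
  mul_one := G.flatMul_one_right f
  mul_assoc := G.flatMul_assoc f

theorem FlatM.mul_def (f : G.E → G.E → C) (a b : G.FlatM f) :
    a * b = G.flatMul f a b := rfl

theorem FlatM.one_def (f : G.E → G.E → C) : (1 : G.FlatM f) = Flat.one := rfl

/-- label into the flat monoid -/
noncomputable def flatLabel (f : G.E → G.E → C) : G.E → G.FlatM f := fun e =>
  if G.o e = G.t e then (1 : G.FlatM f) else Flat.letter e

/-- evaluation of a loop-free word in the flat monoid -/
noncomputable def flatEval (f : G.E → G.E → C) : List G.E → G.FlatM f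
  | [] => Flat.one
  | [x] => Flat.letter x
  | [x, y] => if G.t x = G.o y then Flat.col (f x y) else Flat.zero
  | _ :: _ :: _ :: _ => Flat.zero

theorem labelProd_flat_aux (f : G.E → G.E → C) {s : List G.E}
    (hs : ∀ e ∈ s, G.o e ≠ G.t e) :
    G.labelProd (G.flatLabel f) s = G.flatEval f s := by
  induction s with
  | nil => rfl
  | cons x rest ih =>
    have hx : G.o x ≠ G.t x := hs x (by simp)
    have hrest : ∀ e ∈ rest, G.o e ≠ G.t e := fun e he => hs e (by simp [he])
    have hstep : G.labelProd (G.flatLabel f) (x :: rest) =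
        G.flatLabel f x * G.labelProd (G.flatLabel f) rest := by
      simp [labelProd]
    have hlx : G.flatLabel f x = Flat.letter x := by simp [flatLabel, hx]; rfl
    rw [hstep, ih hrest, hlx]
    match rest with
    | [] => rfl
    | [y] => rfl
    | [y, z] =>
      show G.flatMul f _ _ = _
      show G.flatMul f (Flat.letter x)
        (if G.t y = G.o z then (Flat.col (f y z) : Flat G.E C) else Flat.zero) = Flat.zero
      split_ifs <;> rfl
    | y :: z :: w :: r => rfl

theorem labelProd_flat (f : G.E → G.E → C) (s : List G.E) :
    G.labelProd (G.flatLabel f) s = G.flatEval f (G.core s) := by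
  rw [G.labelProd_core (fun e he => by simp [flatLabel, he]) s]
  exact G.labelProd_flat_aux f (fun e he => G.core_loopFree he)

/-! ### A complete system exists -/

noncomputable def fullSystem : Finset (List G.E × List G.E) :=
  ((Finset.univ : Finset G.E).filter (fun e => G.o e = G.t e)).image
      (fun e => ([e], [])) ∪
  ((Finset.univ : Finset (G.E × G.E × G.E × G.E)).filter
      (fun q => G.t q.1 = G.o q.2.1 ∧ G.t q.2.2.1 = G.o q.2.2.2 ∧
        G.o q.1 = G.o q.2.2.1 ∧ G.t q.2.1 = G.t q.2.2.2)).image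
    (fun q => ([q.1, q.2.1], [q.2.2.1, q.2.2.2]))

theorem fullSystem_complete (hqa : G.QuasiAcyclic) (hpb : G.TwoPathBounded)
    (hme : ¬ G.HasMultipleEdges) (htr : ¬ G.HasTriangle) :
    G.IsComplete G.fullSystem := by
  intro M _ l
  constructor
  · intro hcomm r hr
    simp only [fullSystem, Finset.mem_union, Finset.mem_image, Finset.mem_filter] at hr
    rcases hr with ⟨e, ⟨-, he⟩, rfl⟩ | ⟨⟨x, y, z, w⟩, ⟨-, h1, h2, h3, h4⟩, rfl⟩
    · have := hcomm (G.o e) (G.o e) [e] [] (G.isPath_loop he) (G.isPath_nil.2 rfl)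
      simpa [labelProd] using this
    · have p1 : G.IsPath [x, y] (G.o x) (G.t y) := G.isPath_pair h1
      have p2 : G.IsPath [z, w] (G.o x) (G.t y) := by
        rw [h3, h4]; exact G.isPath_pair h2
      exact hcomm _ _ _ _ p1 p2
  · intro hrel
    refine G.isCommutative_of hqa hpb hme htr ?_ ?_
    · intro e he
      have hm : ([e], ([] : List G.E)) ∈ G.fullSystem := by
        simp only [fullSystem, Finset.mem_union, Finset.mem_image, Finset.mem_filter]
        exact Or.inl ⟨e, ⟨Finset.mem_univ e, he⟩, rfl⟩
      have := hrel _ hm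
      simpa [labelProd] using this
    · intro x y z w h1 h2 h3 h4 _ _ _ _
      have hm : ([x, y], [z, w]) ∈ G.fullSystem := by
        simp only [fullSystem, Finset.mem_union, Finset.mem_image, Finset.mem_filter]
        exact Or.inr ⟨⟨x, y, z, w⟩, ⟨Finset.mem_univ _, h1, h2, h3, h4⟩, rfl⟩
      have := hrel _ hm
      simpa [labelProd] using this

theorem exists_min_complete (hqa : G.QuasiAcyclic) (hpb : G.TwoPathBounded)
    (hme : ¬ G.HasMultipleEdges) (htr : ¬ G.HasTriangle) :
    ∃ R : Finset (List G.E × List G.E), G.IsComplete R ∧ R.card = G.eta := by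
  have hne : {n : ℕ | ∃ R : Finset (List G.E × List G.E),
      G.IsComplete R ∧ R.card = n}.Nonempty :=
    ⟨_, G.fullSystem, G.fullSystem_complete hqa hpb hme htr, rfl⟩
  exact Nat.sInf_mem hne

theorem exists_rh_family :
    ∃ F : Finset (G.E × G.E × G.E × G.E), (∀ r ∈ F, G.IsRhomboid r) ∧
      (∀ r ∈ F, ∀ r' ∈ F, r ≠ r' → G.RhDisjoint r r') ∧ F.card = G.rhNum := by
  have hbdd : BddAbove {n : ℕ | ∃ F : Finset (G.E × G.E × G.E × G.E),
      (∀ r ∈ F, G.IsRhomboid r) ∧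
      (∀ r ∈ F, ∀ r' ∈ F, r ≠ r' → G.RhDisjoint r r') ∧ F.card = n} := by
    refine ⟨Fintype.card (G.E × G.E × G.E × G.E), ?_⟩
    rintro n ⟨F, -, -, rfl⟩
    simpa using F.card_le_univ
  have h0 : (0 : ℕ) ∈ {n : ℕ | ∃ F : Finset (G.E × G.E × G.E × G.E),
      (∀ r ∈ F, G.IsRhomboid r) ∧
      (∀ r ∈ F, ∀ r' ∈ F, r ≠ r' → G.RhDisjoint r r') ∧ F.card = n} :=
    ⟨∅, by simp, by simp, rfl⟩
  exact Nat.sSup_mem ⟨0, h0⟩ hbdd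

/-! ### Lower bound: loops -/

noncomputable def lsum {k : Type} [AddCommMonoid k]
    (v : {e : G.E // G.o e = G.t e} → k) (s : List G.E) : k :=
  (s.map (fun e => if h : G.o e = G.t e then v ⟨e, h⟩ else 0)).sum

theorem lsum_add {k : Type} [AddCommMonoid k]
    (v w : {e : G.E // G.o e = G.t e} → k) (s : List G.E) :
    G.lsum (v + w) s = G.lsum v s + G.lsum w s := by
  induction s with
  | nil => simp [lsum]
  | cons e s ih =>
    simp only [lsum, List.map_cons, List.sum_cons] at ih ⊢
    rw [ih]
    split_ifs with h
    · exact add_add_add_comm _ _ _ _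
    · simp

theorem lsum_smul (c : ℚ) (v : {e : G.E // G.o e = G.t e} → ℚ) (s : List G.E) :
    G.lsum (c • v) s = c * G.lsum v s := by
  induction s with
  | nil => simp [lsum]
  | cons e s ih =>
    simp only [lsum, List.map_cons, List.sum_cons] at ih ⊢
    rw [ih]
    split_ifs with h
    · simp only [Pi.smul_apply, smul_eq_mul]; ring
    · simp

/-- labeling detecting loops -/
noncomputable def loopLabel (v : {e : G.E // G.o e = G.t e} → ℚ) :
    G.E → WithZero (Multiplicative ℚ) := fun e =>
  if h : G.o e = G.t e then ((Multiplicative.ofAdd (v ⟨e, h⟩) : Multiplicative ℚ) :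
    WithZero (Multiplicative ℚ)) else 0

theorem labelProd_loopLabel_of_loops (v : {e : G.E // G.o e = G.t e} → ℚ)
    {s : List G.E} (hs : ∀ e ∈ s, G.o e = G.t e) :
    G.labelProd (G.loopLabel v) s =
      ((Multiplicative.ofAdd (G.lsum v s) : Multiplicative ℚ) :
        WithZero (Multiplicative ℚ)) := by
  induction s with
  | nil => simp [labelProd, lsum]
  | cons e s ih =>
    have he : G.o e = G.t e := hs e (by simp)
    have hs' : ∀ e ∈ s, G.o e = G.t e := fun e hee => hs e (by simp [hee])
    have : G.labelProd (G.loopLabel v) (e :: s) =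
        G.loopLabel v e * G.labelProd (G.loopLabel v) s := by simp [labelProd]
    rw [this, ih hs']
    simp only [loopLabel, he, dif_pos, lsum, List.map_cons, List.sum_cons,
      ← WithZero.coe_mul, ← ofAdd_add]

theorem labelProd_loopLabel_of_nonloop (v : {e : G.E // G.o e = G.t e} → ℚ)
    {s : List G.E} (hs : ∃ e ∈ s, G.o e ≠ G.t e) :
    G.labelProd (G.loopLabel v) s = 0 := by
  induction s with
  | nil => simp at hs
  | cons e s ih =>
    have hstep : G.labelProd (G.loopLabel v) (e :: s) =
        G.loopLabel v e * G.labelProd (G.loopLabel v) s := by simp [labelProd]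
    by_cases he : G.o e = G.t e
    · obtain ⟨f, hf, hfl⟩ := hs
      rcases List.mem_cons.1 hf with rfl | hfs
      · exact absurd he hfl
      · rw [hstep, ih ⟨f, hfs, hfl⟩, mul_zero]
    · rw [hstep]
      have : G.loopLabel v e = 0 := by simp [loopLabel, he]
      rw [this, zero_mul]

theorem loopLabel_zero_commutative (hqa : G.QuasiAcyclic) (hpb : G.TwoPathBounded)
    (hme : ¬ G.HasMultipleEdges) (htr : ¬ G.HasTriangle) :
    G.IsCommutative (G.loopLabel 0) := by
  refine G.isCommutative_of hqa hpb hme htr ?_ ?_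
  · intro e he; simp [loopLabel, he]
  · intro x y z w _ _ _ _ hx hy hz hw
    have lx : G.loopLabel 0 x = 0 := by simp [loopLabel, hx]
    have lz : G.loopLabel 0 z = 0 := by simp [loopLabel, hz]
    rw [lx, lz, zero_mul, zero_mul]

theorem nonAllLoops_both (hqa : G.QuasiAcyclic) (hpb : G.TwoPathBounded)
    (hme : ¬ G.HasMultipleEdges) (htr : ¬ G.HasTriangle)
    {R : Finset (List G.E × List G.E)} (hR : G.IsComplete R)
    {r : List G.E × List G.E} (hr : r ∈ R) (hA : ¬ G.AllLoops r) :
    (∃ e ∈ r.1, G.o e ≠ G.t e) ∧ (∃ e ∈ r.2, G.o e ≠ G.t e) := by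
  have hrel := (hR _ (G.loopLabel 0)).mp
    (G.loopLabel_zero_commutative hqa hpb hme htr) r hr
  simp only [AllLoops, not_and_or] at hA
  have key : ∀ s₁ s₂ : List G.E, G.labelProd (G.loopLabel 0) s₁ =
      G.labelProd (G.loopLabel 0) s₂ → (∃ e ∈ s₁, G.o e ≠ G.t e) →
      ∃ e ∈ s₂, G.o e ≠ G.t e := by
    intro s₁ s₂ heq h1
    by_contra h2
    push_neg at h2
    rw [G.labelProd_loopLabel_of_nonloop 0 h1,
      G.labelProd_loopLabel_of_loops 0 h2] at heq
    exact WithZero.zero_ne_coe heq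
  rcases hA with h | h
  · push_neg at h
    exact ⟨h, key _ _ hrel h⟩
  · push_neg at h
    exact ⟨key _ _ hrel.symm h, h⟩

theorem loopCount_le (hqa : G.QuasiAcyclic) (hpb : G.TwoPathBounded)
    (hme : ¬ G.HasMultipleEdges) (htr : ¬ G.HasTriangle)
    {R : Finset (List G.E × List G.E)} (hR : G.IsComplete R) :
    G.loopCount ≤ (R.filter (fun r => G.AllLoops r)).card := by
  classical
  set RL := R.filter (fun r => G.AllLoops r) with hRL
  haveI : Fintype {e : G.E // G.o e = G.t e} := Fintype.ofFinite _
  set Φ : ({e : G.E // G.o e = G.t e} → ℚ) →ₗ[ℚ] (↥RL → ℚ) :=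
    { toFun := fun v r => G.lsum v r.1.1 - G.lsum v r.1.2
      map_add' := by
        intro v w; funext r
        simp only [lsum_add, Pi.add_apply]
        ring
      map_smul' := by
        intro c v; funext r
        simp only [lsum_smul, RingHom.id_apply, Pi.smul_apply, smul_eq_mul]
        ring } with hΦ
  have hinj : Function.Injective Φ := by
    rw [injective_iff_map_eq_zero]
    intro v hv
    have hrels : ∀ r ∈ R, G.labelProd (G.loopLabel v) r.1 =
        G.labelProd (G.loopLabel v) r.2 := by
      intro r hr
      by_cases hA : G.AllLoops r
      · have hmem : r ∈ RL := Finset.mem_filter.2 ⟨hr, hA⟩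
        have h0 : G.lsum v r.1 - G.lsum v r.2 = 0 := congrFun hv ⟨r, hmem⟩
        rw [G.labelProd_loopLabel_of_loops v hA.1,
          G.labelProd_loopLabel_of_loops v hA.2]
        congr 2
        linarith
      · obtain ⟨h1, h2⟩ := G.nonAllLoops_both hqa hpb hme htr hR hr hA
        rw [G.labelProd_loopLabel_of_nonloop v h1,
          G.labelProd_loopLabel_of_nonloop v h2]
    have hcomm := (hR _ (G.loopLabel v)).mpr hrels
    funext e
    have := hcomm (G.o e.1) (G.o e.1) [e.1] [] (G.isPath_loop e.2) (G.isPath_nil.2 rfl)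
    simp only [labelProd, List.map_cons, List.map_nil, List.prod_cons,
      List.prod_nil, mul_one] at this
    simp only [loopLabel, e.2, dif_pos] at this
    have he2 : Multiplicative.ofAdd (v ⟨e.1, e.2⟩) = (1 : Multiplicative ℚ) := by
      rwa [← WithZero.coe_one, WithZero.coe_inj] at this
    have : v ⟨e.1, e.2⟩ = 0 := by
      have := congrArg Multiplicative.toAdd he2
      simpa using this
    simpa using this
  have h1 : Fintype.card {e : G.E // G.o e = G.t e} =
      Module.finrank ℚ ({e : G.E // G.o e = G.t e} → ℚ) :=
    (Module.finrank_fintype_fun_eq_card ℚ).symm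
  have h2 : Module.finrank ℚ (↥RL → ℚ) = Fintype.card ↥RL :=
    Module.finrank_fintype_fun_eq_card ℚ
  have h3 := LinearMap.finrank_le_finrank_of_injective hinj
  have : G.loopCount = Fintype.card {e : G.E // G.o e = G.t e} :=
    Nat.card_eq_fintype_card
  rw [this, h1]
  rw [h2] at h3
  simpa using h3

/-! ### Lower bound: rhomboid classes -/

noncomputable def sideSet (u v : G.V) : Finset (G.E × G.E) :=
  Finset.univ.filter (fun q => G.t q.1 = G.o q.2 ∧ G.o q.1 ≠ G.t q.1 ∧
    G.o q.2 ≠ G.t q.2 ∧ G.o q.1 = u ∧ G.t q.2 = v)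

theorem mem_sideSet {u v : G.V} {q : G.E × G.E} :
    q ∈ G.sideSet u v ↔ G.t q.1 = G.o q.2 ∧ G.o q.1 ≠ G.t q.1 ∧
      G.o q.2 ≠ G.t q.2 ∧ G.o q.1 = u ∧ G.t q.2 = v := by
  simp [sideSet]

/-- the coarse coloring -/
noncomputable def fullCol : G.E → G.E → G.V × G.V := fun x y => (G.o x, G.t y)

/-- the cut coloring -/
noncomputable def cutCol (u v : G.V) (A : Finset (G.E × G.E)) :
    G.E → G.E → Bool ⊕ (G.V × G.V) := fun x y =>
  if G.o x = u ∧ G.t y = v then Sum.inl (decide ((x, y) ∈ A))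
  else Sum.inr (G.o x, G.t y)

theorem flatLabel_nonloop {C : Type} (f : G.E → G.E → C) {e : G.E}
    (h : G.o e ≠ G.t e) : G.flatLabel f e = Flat.letter e := by
  simp [flatLabel, h]; rfl

theorem flatLabel_pair {C : Type} (f : G.E → G.E → C) {x y : G.E}
    (hx : G.o x ≠ G.t x) (hy : G.o y ≠ G.t y) (hc : G.t x = G.o y) :
    G.labelProd (G.flatLabel f) [x, y] = Flat.col (f x y) := by
  rw [G.labelProd_pair, FlatM.mul_def, G.flatLabel_nonloop f hx, G.flatLabel_nonloop f hy]
  simp [flatMul, hc]; rfl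

theorem fullLabel_commutative (hqa : G.QuasiAcyclic) (hpb : G.TwoPathBounded)
    (hme : ¬ G.HasMultipleEdges) (htr : ¬ G.HasTriangle) :
    G.IsCommutative (G.flatLabel G.fullCol) := by
  refine G.isCommutative_of hqa hpb hme htr ?_ ?_
  · intro e he; simp [flatLabel, he]
  · intro x y z w h1 h2 h3 h4 hx hy hz hw
    rw [FlatM.mul_def, FlatM.mul_def, G.flatLabel_nonloop _ hx, G.flatLabel_nonloop _ hy,
      G.flatLabel_nonloop _ hz, G.flatLabel_nonloop _ hw]
    simp [flatMul, h1, h2, fullCol, h3, h4]; rfl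

theorem flatEval_shape (s : List G.E) :
    s = [] ∨ (∃ x, s = [x]) ∨ (∃ x y, s = [x, y] ∧ G.t x = G.o y) ∨
      (∀ (C : Type) (f : G.E → G.E → C), G.flatEval f s = Flat.zero) := by
  match s with
  | [] => exact Or.inl rfl
  | [x] => exact Or.inr (Or.inl ⟨x, rfl⟩)
  | [x, y] =>
    by_cases h : G.t x = G.o y
    · exact Or.inr (Or.inr (Or.inl ⟨x, y, rfl, h⟩))
    · refine Or.inr (Or.inr (Or.inr (fun C f => ?_)))
      simp [flatEval, h]; rfl
  | x :: y :: z :: r => exact Or.inr (Or.inr (Or.inr (fun C f => rfl)))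

theorem flatEval_pair {C : Type} (f : G.E → G.E → C) {x y : G.E}
    (h : G.t x = G.o y) : G.flatEval f [x, y] = Flat.col (f x y) := by
  simp [flatEval, h]; rfl

theorem cut_crossed (hqa : G.QuasiAcyclic) (hpb : G.TwoPathBounded)
    (hme : ¬ G.HasMultipleEdges) (htr : ¬ G.HasTriangle)
    {R : Finset (List G.E × List G.E)} (hR : G.IsComplete R) {u v : G.V}
    {A : Finset (G.E × G.E)} (hA : A ⊆ G.sideSet u v) (h1 : A.Nonempty)
    (h2 : A ≠ G.sideSet u v) :
    ∃ r ∈ R, ∃ x y z w : G.E,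
      G.core r.1 = [x, y] ∧ G.core r.2 = [z, w] ∧
      (x, y) ∈ G.sideSet u v ∧ (z, w) ∈ G.sideSet u v ∧
      ((x, y) ∈ A ↔ ¬ ((z, w) ∈ A)) := by
  classical
  set fc := G.cutCol u v A with hfc
  -- the cut labeling is not commutative
  obtain ⟨⟨x₀, y₀⟩, hx0A⟩ := h1
  have hx0S := hA hx0A
  obtain ⟨⟨x₁, y₁⟩, hx1S, hx1A⟩ : ∃ q ∈ G.sideSet u v, q ∉ A := by
    by_contra hcon
    push_neg at hcon
    exact h2 (Finset.Subset.antisymm hA hcon)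
  rw [G.mem_sideSet] at hx0S hx1S
  obtain ⟨hc0, hnl0a, hnl0b, ho0, ht0⟩ := hx0S
  obtain ⟨hc1, hnl1a, hnl1b, ho1, ht1⟩ := hx1S
  have hval0 : G.labelProd (G.flatLabel fc) [x₀, y₀] =
      Flat.col (Sum.inl true) := by
    rw [G.flatLabel_pair fc hnl0a hnl0b hc0, hfc]
    simp [cutCol, ho0, ht0, hx0A]; rfl
  have hval1 : G.labelProd (G.flatLabel fc) [x₁, y₁] =
      Flat.col (Sum.inl false) := by
    rw [G.flatLabel_pair fc hnl1a hnl1b hc1, hfc]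
    simp [cutCol, ho1, ht1, hx1A]; rfl
  have hnc : ¬ G.IsCommutative (G.flatLabel fc) := by
    intro hcomm
    have p0 : G.IsPath [x₀, y₀] u v := by
      rw [← ho0, ← ht0]; exact G.isPath_pair hc0
    have p1 : G.IsPath [x₁, y₁] u v := by
      rw [← ho1, ← ht1]; exact G.isPath_pair hc1
    have := hcomm u v _ _ p0 p1
    rw [hval0, hval1] at this
    have hb : true = false := Sum.inl.inj (Flat.col.inj this)
    exact Bool.noConfusion hb
  -- some relation fails for the cut labeling
  obtain ⟨r, hrR, hrne⟩ : ∃ r ∈ R, G.labelProd (G.flatLabel fc) r.1 ≠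
      G.labelProd (G.flatLabel fc) r.2 := by
    by_contra hcon
    push_neg at hcon
    exact hnc ((hR _ (G.flatLabel fc)).mpr hcon)
  -- but all relations hold for the coarse labeling
  have hrfull : G.labelProd (G.flatLabel G.fullCol) r.1 =
      G.labelProd (G.flatLabel G.fullCol) r.2 :=
    (hR _ (G.flatLabel G.fullCol)).mp (G.fullLabel_commutative hqa hpb hme htr) r hrR
  rw [G.labelProd_flat fc r.1, G.labelProd_flat fc r.2] at hrne
  rw [G.labelProd_flat G.fullCol r.1, G.labelProd_flat G.fullCol r.2] at hrfull
  refine ⟨r, hrR, ?_⟩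
  rcases G.flatEval_shape (G.core r.1) with e1 | ⟨x, e1⟩ | ⟨x, y, e1, hcxy⟩ | hz1 <;>
    rcases G.flatEval_shape (G.core r.2) with e2 | ⟨z, e2⟩ | ⟨z, w, e2, hczw⟩ | hz2
  · rw [e1, e2] at hrne; exact absurd rfl hrne
  · rw [e1, e2] at hrfull; simp [flatEval] at hrfull
  · rw [e1, e2, G.flatEval_pair _ hczw] at hrfull; simp [flatEval] at hrfull
  · rw [e1, hz2] at hrfull; simp [flatEval] at hrfull
  · rw [e1, e2] at hrfull; simp [flatEval] at hrfull
  · rw [e1, e2] at hrfull hrne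
    simp only [flatEval] at hrfull
    replace hrfull := Flat.letter.inj hrfull
    subst hrfull
    exact absurd rfl hrne
  · rw [e1, e2, G.flatEval_pair _ hczw] at hrfull; simp [flatEval] at hrfull
  · rw [e1, hz2] at hrfull; simp [flatEval] at hrfull
  · rw [e1, e2, G.flatEval_pair _ hcxy] at hrfull; simp [flatEval] at hrfull
  · rw [e1, e2, G.flatEval_pair _ hcxy] at hrfull; simp [flatEval] at hrfull
  · -- the main case
    rw [e1, e2, G.flatEval_pair _ hcxy, G.flatEval_pair _ hczw] at hrfull hrne
    replace hrfull := Flat.col.inj hrfull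
    have hfne : fc x y ≠ fc z w := by
      intro hh; rw [hh] at hrne; exact absurd rfl hrne
    have hxy1 : G.o x ≠ G.t x := G.core_loopFree (e1 ▸ (by simp : x ∈ [x, y]))
    have hxy2 : G.o y ≠ G.t y := G.core_loopFree (e1 ▸ (by simp : y ∈ [x, y]))
    have hzw1 : G.o z ≠ G.t z := G.core_loopFree (e2 ▸ (by simp : z ∈ [z, w]))
    have hzw2 : G.o w ≠ G.t w := G.core_loopFree (e2 ▸ (by simp : w ∈ [z, w]))
    have hpair : G.o x = G.o z ∧ G.t y = G.t w := by
      have := hrfull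
      simp only [fullCol, Prod.mk.injEq] at this
      exact this
    by_cases htest : G.o x = u ∧ G.t y = v
    · have htest2 : G.o z = u ∧ G.t w = v := by
        rw [← hpair.1, ← hpair.2]; exact htest
      have hfc1 : fc x y = Sum.inl (decide ((x, y) ∈ A)) := by
        rw [hfc]; simp [cutCol, htest]
      have hfc2 : fc z w = Sum.inl (decide ((z, w) ∈ A)) := by
        rw [hfc]; simp [cutCol, htest2]
      rw [hfc1, hfc2] at hfne
      have hdne : decide ((x, y) ∈ A) ≠ decide ((z, w) ∈ A) := by
        intro hh; rw [hh] at hfne; exact absurd rfl hfne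
      refine ⟨x, y, z, w, e1, e2, ?_, ?_, ?_⟩
      · exact G.mem_sideSet.2 ⟨hcxy, hxy1, hxy2, htest.1, htest.2⟩
      · exact G.mem_sideSet.2 ⟨hczw, hzw1, hzw2, htest2.1, htest2.2⟩
      · by_cases hmem : (x, y) ∈ A <;> by_cases hmem2 : (z, w) ∈ A <;>
          simp [hmem, hmem2] at hdne ⊢ <;> tauto
    · have htest2 : ¬ (G.o z = u ∧ G.t w = v) := by
        rw [← hpair.1, ← hpair.2]; exact htest
      exfalso
      apply hfne
      rw [hfc]
      simp only [cutCol, htest, htest2, if_false]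
      rw [hpair.1, hpair.2]
  · rw [e1, hz2, G.flatEval_pair _ hcxy] at hrfull; simp at hrfull
  · rw [hz1, e2] at hrfull; simp [flatEval] at hrfull
  · rw [hz1, e2] at hrfull; simp [flatEval] at hrfull
  · rw [hz1, e2, G.flatEval_pair _ hczw] at hrfull; simp at hrfull
  · rw [hz1, hz2] at hrne; exact absurd rfl hrne

end OrientedGraph

/-- abstract counting: if every cut of `S` is crossed by an edge from `T`,
then `T` has at least `S.card - 1` elements. -/
theorem cut_count {σ τ : Type} (n : ℕ) : ∀ (S : Finset σ) (T : Finset τ)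
    (g : τ → σ × σ), S.card = n →
    (∀ r ∈ T, (g r).1 ∈ S ∧ (g r).2 ∈ S) →
    (∀ A : Finset σ, A ⊆ S → A.Nonempty → A ≠ S →
      ∃ r ∈ T, ((g r).1 ∈ A ∧ (g r).2 ∉ A) ∨ ((g r).2 ∈ A ∧ (g r).1 ∉ A)) →
    S.card - 1 ≤ T.card := by
  classical
  induction n using Nat.strong_induction_on with
  | _ n ih =>
    intro S T g hn hg hcut
    by_cases hsmall : S.card ≤ 1
    · omega
    · push_neg at hsmall
      obtain ⟨s₀, hs₀⟩ := Finset.card_pos.1 (by omega : 0 < S.card)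
      have hA1 : ({s₀} : Finset σ) ≠ S := by
        intro hh
        rw [← hh] at hsmall
        simp at hsmall
      obtain ⟨r₀, hr₀T, hr₀cross⟩ := hcut {s₀} (by simpa using hs₀)
        ⟨s₀, by simp⟩ hA1
      -- normalize: one endpoint is s₀, the other is t₀ ≠ s₀
      obtain ⟨t₀, ht₀S, ht₀ne, hends⟩ : ∃ t₀, t₀ ∈ S ∧ t₀ ≠ s₀ ∧
          (((g r₀).1 = s₀ ∧ (g r₀).2 = t₀) ∨ ((g r₀).2 = s₀ ∧ (g r₀).1 = t₀)) := by
        rcases hr₀cross with ⟨h1, h2⟩ | ⟨h1, h2⟩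
        · refine ⟨(g r₀).2, (hg r₀ hr₀T).2, by simpa using h2,
            Or.inl ⟨by simpa using h1, rfl⟩⟩
        · refine ⟨(g r₀).1, (hg r₀ hr₀T).1, by simpa using h2,
            Or.inr ⟨by simpa using h1, rfl⟩⟩
      set rel : σ → σ := fun s => if s = s₀ then t₀ else s with hrel
      set S' := S.erase s₀ with hS'
      set T' := T.erase r₀ with hT'
      set g' : τ → σ × σ := fun r => (rel (g r).1, rel (g r).2) with hg'
      have hrelS : ∀ s ∈ S, rel s ∈ S' := by
        intro s hs
        rw [hrel]
        by_cases hss : s = s₀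
        · simp only [hss, if_pos rfl]
          exact Finset.mem_erase.2 ⟨ht₀ne, ht₀S⟩
        · simp only [if_neg hss]
          exact Finset.mem_erase.2 ⟨hss, hs⟩
      have key : S'.card - 1 ≤ T'.card := by
        refine ih (n - 1) (by omega) S' T' g' ?_ ?_ ?_
        · rw [hS', Finset.card_erase_of_mem hs₀, hn]
        · intro r hr
          exact ⟨hrelS _ (hg r (Finset.mem_of_mem_erase hr)).1,
            hrelS _ (hg r (Finset.mem_of_mem_erase hr)).2⟩
        · intro A' hA'sub hA'ne hA'neq
          set A'' := if t₀ ∈ A' then insert s₀ A' else A' with hA''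
          have hs₀A'' : s₀ ∈ A'' ↔ t₀ ∈ A' := by
            rw [hA'']
            by_cases hh : t₀ ∈ A' <;> simp [hh]
            intro hcon
            exact (Finset.mem_erase.1 (hA'sub hcon)).1 rfl
          have hmemA'' : ∀ s, s ≠ s₀ → (s ∈ A'' ↔ s ∈ A') := by
            intro s hsne
            rw [hA'']
            by_cases hh : t₀ ∈ A' <;> simp [hh, hsne]
          have hrelA : ∀ s ∈ S, (rel s ∈ A' ↔ s ∈ A'') := by
            intro s hs
            by_cases hss : s = s₀
            · subst hss
              rw [hrel]
              simp only [if_pos rfl]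
              exact hs₀A''.symm
            · rw [hrel]
              simp only [if_neg hss]
              exact (hmemA'' s hss).symm
          have hsubA'' : A'' ⊆ S := by
            rw [hA'']
            split_ifs with hh
            · intro a ha
              rcases Finset.mem_insert.1 ha with rfl | ha
              · exact hs₀
              · exact Finset.mem_of_mem_erase (hA'sub ha)
            · exact fun a ha => Finset.mem_of_mem_erase (hA'sub ha)
          have hneA'' : A''.Nonempty := by
            obtain ⟨a, ha⟩ := hA'ne
            refine ⟨a, ?_⟩
            rw [hmemA'' a (fun hh => (Finset.mem_erase.1 (hA'sub ha)).1 hh)]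
            exact ha
          have hneqA'' : A'' ≠ S := by
            obtain ⟨b, hbS', hbA'⟩ := Finset.exists_of_ssubset
              (lt_of_le_of_ne hA'sub hA'neq)
            intro hcon
            have hbS : b ∈ S := Finset.mem_of_mem_erase hbS'
            have hbne : b ≠ s₀ := (Finset.mem_erase.1 hbS').1
            have : b ∈ A'' := hcon ▸ hbS
            rw [hmemA'' b hbne] at this
            exact hbA' this
          obtain ⟨r, hrT, hrcross⟩ := hcut A'' hsubA'' hneA'' hneqA''
          have hrne : r ≠ r₀ := by
            intro hh
            subst hh
            have hgs : ((g r).1 ∈ A'' ↔ t₀ ∈ A') ∧ ((g r).2 ∈ A'' ↔ t₀ ∈ A') := by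
              rcases hends with ⟨e1, e2⟩ | ⟨e1, e2⟩
              · rw [e1, e2]
                constructor
                · exact hs₀A''
                · exact hmemA'' t₀ ht₀ne
              · rw [e1, e2]
                constructor
                · exact hmemA'' t₀ ht₀ne
                · exact hs₀A''
            rcases hrcross with ⟨h1, h2⟩ | ⟨h1, h2⟩
            · exact h2 (hgs.2.2 (hgs.1.1 h1))
            · exact h2 (hgs.1.2 (hgs.2.1 h1))
          refine ⟨r, Finset.mem_erase.2 ⟨hrne, hrT⟩, ?_⟩
          have h1 := hrelA (g r).1 (hg r hrT).1
          have h2 := hrelA (g r).2 (hg r hrT).2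
          rcases hrcross with ⟨ha, hb⟩ | ⟨ha, hb⟩
          · exact Or.inl ⟨h1.2 ha, fun hc => hb (h2.1 hc)⟩
          · exact Or.inr ⟨h2.2 ha, fun hc => hb (h1.1 hc)⟩
      have hT'card : T'.card = T.card - 1 := Finset.card_erase_of_mem hr₀T
      have hS'card : S'.card = S.card - 1 := Finset.card_erase_of_mem hs₀
      have hTpos : 0 < T.card := Finset.card_pos.2 ⟨r₀, hr₀T⟩
      omega

namespace OrientedGraph

variable (G : OrientedGraph)

noncomputable def pairOf (s : List G.E) : G.E × G.E :=
  match s with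
  | [x, y] => (x, y)
  | _ => Classical.arbitrary _

theorem pairOf_pair (x y : G.E) : G.pairOf [x, y] = (x, y) := rfl

def SideRel (r : List G.E × List G.E) (u v : G.V) : Prop :=
  ∃ x y z w : G.E, G.core r.1 = [x, y] ∧ G.core r.2 = [z, w] ∧
    (x, y) ∈ G.sideSet u v ∧ (z, w) ∈ G.sideSet u v

theorem class_count (hqa : G.QuasiAcyclic) (hpb : G.TwoPathBounded)
    (hme : ¬ G.HasMultipleEdges) (htr : ¬ G.HasTriangle)
    {R : Finset (List G.E × List G.E)} (hR : G.IsComplete R) (u v : G.V) :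
    (G.sideSet u v).card - 1 ≤ (R.filter (fun r => G.SideRel r u v)).card := by
  classical
  refine cut_count (G.sideSet u v).card (G.sideSet u v) _
    (fun r => (G.pairOf (G.core r.1), G.pairOf (G.core r.2))) rfl ?_ ?_
  · intro r hr
    obtain ⟨hrR, x, y, z, w, h1, h2, h3, h4⟩ := Finset.mem_filter.1 hr
    dsimp only
    rw [h1, h2, G.pairOf_pair, G.pairOf_pair]
    exact ⟨h3, h4⟩
  · intro A hAsub hAne hAneq
    obtain ⟨r, hrR, x, y, z, w, e1, e2, m1, m2, hiff⟩ :=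
      G.cut_crossed hqa hpb hme htr hR hAsub hAne hAneq
    refine ⟨r, Finset.mem_filter.2 ⟨hrR, x, y, z, w, e1, e2, m1, m2⟩, ?_⟩
    dsimp only
    rw [e1, e2, G.pairOf_pair, G.pairOf_pair]
    by_cases hm : (x, y) ∈ A
    · exact Or.inl ⟨hm, hiff.1 hm⟩
    · refine Or.inr ⟨?_, hm⟩
      by_contra hc
      exact hm (hiff.2 hc)

theorem core_eq_nil {s : List G.E} (hs : ∀ e ∈ s, G.o e = G.t e) :
    G.core s = [] := by
  induction s with
  | nil => rfl
  | cons e s ih =>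
    have he : G.o e = G.t e := hs e (by simp)
    have : G.core (e :: s) = G.core s := by simp [core, he]
    rw [this]
    exact ih (fun f hf => hs f (by simp [hf]))

theorem main_count (hqa : G.QuasiAcyclic) (hpb : G.TwoPathBounded)
    (hme : ¬ G.HasMultipleEdges) (htr : ¬ G.HasTriangle)
    {R : Finset (List G.E × List G.E)} (hR : G.IsComplete R)
    {F : Finset (G.E × G.E × G.E × G.E)} (hF1 : ∀ r ∈ F, G.IsRhomboid r)
    (hF2 : ∀ r ∈ F, ∀ r' ∈ F, r ≠ r' → G.RhDisjoint r r') :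
    F.card + G.loopCount ≤ R.card := by
  classical
  set RL := R.filter (fun r => G.AllLoops r) with hRL
  set RS := R.filter (fun r => ∃ u v, G.SideRel r u v) with hRS
  have hloop : G.loopCount ≤ RL.card := G.loopCount_le hqa hpb hme htr hR
  set clF : (G.E × G.E × G.E × G.E) → G.V × G.V :=
    fun ρ => (G.o ρ.1, G.t ρ.2.1) with hclF
  set clR : (List G.E × List G.E) → G.V × G.V :=
    fun r => (G.o (G.pairOf (G.core r.1)).1, G.t (G.pairOf (G.core r.1)).2) with hclR
  have hFcard : F.card = ∑ p ∈ (Finset.univ : Finset (G.V × G.V)),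
      (F.filter (fun ρ => clF ρ = p)).card :=
    Finset.card_eq_sum_card_fiberwise (fun ρ _ => Finset.mem_univ _)
  have hRScard : RS.card = ∑ p ∈ (Finset.univ : Finset (G.V × G.V)),
      (RS.filter (fun r => clR r = p)).card :=
    Finset.card_eq_sum_card_fiberwise (fun r _ => Finset.mem_univ _)
  have hper : ∀ p : G.V × G.V, (F.filter (fun ρ => clF ρ = p)).card ≤
      (RS.filter (fun r => clR r = p)).card := by
    rintro ⟨u, v⟩
    set Fp := F.filter (fun ρ => clF ρ = (u, v)) with hFp
    by_cases hFne : Fp.Nonempty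
    swap
    · rw [Finset.not_nonempty_iff_eq_empty] at hFne
      simp [hFne]
    -- the two sides of each rhomboid in the class
    have hsides : ∀ ρ ∈ Fp, (ρ.1, ρ.2.1) ∈ G.sideSet u v ∧
        (ρ.2.2.1, ρ.2.2.2) ∈ G.sideSet u v ∧ (ρ.1, ρ.2.1) ≠ (ρ.2.2.1, ρ.2.2.2) := by
      intro ρ hρ
      obtain ⟨hρF, hρcl⟩ := Finset.mem_filter.1 hρ
      obtain ⟨g1, g2, g3, g4, g5, g6, g7, g8, g9, g10⟩ := hF1 ρ hρF
      have hclu : G.o ρ.1 = u := (Prod.mk.injEq _ _ _ _ ▸ hρcl).1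
      have hclv : G.t ρ.2.1 = v := (Prod.mk.injEq _ _ _ _ ▸ hρcl).2
      refine ⟨?_, ?_, ?_⟩
      · exact G.mem_sideSet.2 ⟨g3, g5, by rw [← g3, g2]; exact g9, hclu, hclv⟩
      · refine G.mem_sideSet.2 ⟨g4, ?_, g10, by rw [← g1]; exact hclu,
          by rw [← g2]; exact hclv⟩
        rw [← g1, g4]; exact g6
      · intro hh
        have ha : ρ.1 = ρ.2.2.1 := (Prod.mk.injEq _ _ _ _ ▸ hh).1
        apply g8
        rw [ha, g4]
    -- disjoint union of the side pairs
    set U := Fp.biUnion (fun ρ => ({(ρ.1, ρ.2.1), (ρ.2.2.1, ρ.2.2.2)} :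
      Finset (G.E × G.E))) with hU
    have hUcard : U.card = 2 * Fp.card := by
      rw [hU, Finset.card_biUnion]
      · rw [Finset.sum_congr rfl (fun ρ hρ => ?_), Finset.sum_const,
          smul_eq_mul, mul_comm]
        rw [Finset.card_insert_of_notMem (by simp [(hsides ρ hρ).2.2]),
          Finset.card_singleton]
      · intro ρ hρ ρ' hρ' hne
        obtain ⟨d1, d2, d3, d4⟩ := hF2 ρ (Finset.mem_filter.1 hρ).1 ρ'
          (Finset.mem_filter.1 hρ').1 hne
        rw [Function.onFun, Finset.disjoint_left]
        intro q hq hq'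
        simp only [Finset.mem_insert, Finset.mem_singleton] at hq hq'
        rcases hq with rfl | rfl <;> rcases hq' with hq' | hq'
        · have := (Prod.mk.injEq _ _ _ _ ▸ hq')
          rcases d1 with d | d
          · exact d this.1
          · exact d this.2
        · have := (Prod.mk.injEq _ _ _ _ ▸ hq')
          rcases d2 with d | d
          · exact d this.1
          · exact d this.2
        · have := (Prod.mk.injEq _ _ _ _ ▸ hq')
          rcases d4 with d | d
          · exact d this.1
          · exact d this.2
        · have := (Prod.mk.injEq _ _ _ _ ▸ hq')
          rcases d3 with d | d
          · exact d this.1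
          · exact d this.2
    have hUsub : U ⊆ G.sideSet u v := by
      intro q hq
      rw [hU] at hq
      obtain ⟨ρ, hρ, hqρ⟩ := Finset.mem_biUnion.1 hq
      simp only [Finset.mem_insert, Finset.mem_singleton] at hqρ
      rcases hqρ with rfl | rfl
      · exact (hsides ρ hρ).1
      · exact (hsides ρ hρ).2.1
    have h2F : 2 * Fp.card ≤ (G.sideSet u v).card := by
      rw [← hUcard]; exact Finset.card_le_card hUsub
    have hclass := G.class_count hqa hpb hme htr hR u v
    have hsubRS : R.filter (fun r => G.SideRel r u v) ⊆
        RS.filter (fun r => clR r = (u, v)) := by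
      intro r hr
      obtain ⟨hrR, x, y, z, w, e1, e2, m1, m2⟩ := Finset.mem_filter.1 hr
      refine Finset.mem_filter.2 ⟨Finset.mem_filter.2 ⟨hrR, u, v, x, y, z, w,
        e1, e2, m1, m2⟩, ?_⟩
      rw [hclR]
      simp only [e1, G.pairOf_pair]
      obtain ⟨-, -, -, hxu, hyv⟩ := G.mem_sideSet.1 m1
      rw [hxu, hyv]
    have hFpos : 1 ≤ Fp.card := Finset.card_pos.2 hFne
    have := Finset.card_le_card hsubRS
    omega
  have hdisj : Disjoint RL RS := by
    rw [Finset.disjoint_left]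
    intro r hrL hrS
    obtain ⟨-, hAL⟩ := Finset.mem_filter.1 hrL
    obtain ⟨-, u, v, x, y, z, w, e1, -⟩ := Finset.mem_filter.1 hrS
    rw [G.core_eq_nil hAL.1] at e1
    exact List.cons_ne_nil _ _ e1.symm
  have hcards : RL.card + RS.card ≤ R.card := by
    rw [← Finset.card_union_of_disjoint hdisj]
    apply Finset.card_le_card
    intro r hr
    rcases Finset.mem_union.1 hr with h | h
    · exact (Finset.mem_filter.1 h).1
    · exact (Finset.mem_filter.1 h).1
  have hsum : F.card ≤ RS.card := by
    rw [hFcard, hRScard]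
    exact Finset.sum_le_sum (fun p _ => hper p)
  omega

end OrientedGraph
end Aux
/-- Theorem: if `G` is quasi-acyclic, 2-path-bounded, without multiple edges and
triangles, then `η(G) ≥ 𝔯𝔥(G) + 𝔏(G)`. -/
theorem eta_ge_rhNum_add_loopCount (G : OrientedGraph) (hqa : G.QuasiAcyclic)
    (hpb : G.TwoPathBounded) (hme : ¬ G.HasMultipleEdges) (htr : ¬ G.HasTriangle) :
    G.rhNum + G.loopCount ≤ G.eta := by
  classical
  obtain ⟨R, hRc, hReta⟩ := G.exists_min_complete hqa hpb hme htr
  obtain ⟨F, hF1, hF2, hFrh⟩ := G.exists_rh_family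
  have h := G.main_count hqa hpb hme htr hRc hF1 hF2
  rw [hFrh, hReta] at h
  exact h
end

section
/- Let G = (V, E) be a quasi-acyclic 2-path-bounded oriented graph without loops, multiple edges and triangles. Then ν(G) ≥ 𝔯𝔥(G). -/
namespace NuAux

open OrientedGraph FreeMonoid

variable {G : OrientedGraph}

/-! ### Basic path lemmas -/

lemma isPath_one (e : G.E) : G.IsPath [e] (G.o e) (G.t e) := by
  refine ⟨List.isChain_singleton e, Or.inr ⟨by simp, rfl, by simp⟩⟩

lemma isPath_two {e f : G.E} (h : G.t e = G.o f) :
    G.IsPath [e, f] (G.o e) (G.t f) := by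
  refine ⟨List.isChain_cons_cons.mpr ⟨h, List.isChain_singleton f⟩, Or.inr ⟨by simp, rfl, by simp⟩⟩

lemma isPath_three {e f g : G.E} (h1 : G.t e = G.o f) (h2 : G.t f = G.o g) :
    G.IsPath [e, f, g] (G.o e) (G.t g) := by
  refine ⟨?_, Or.inr ⟨by simp, rfl, by simp⟩⟩
  exact List.isChain_cons_cons.mpr ⟨h1, List.isChain_cons_cons.mpr ⟨h2, List.isChain_singleton g⟩⟩

lemma isPath_nil_eq {u v : G.V} (h : G.IsPath [] u v) : u = v := by
  rcases h.2 with ⟨_, h⟩ | ⟨h, _⟩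
  · exact h
  · exact absurd rfl h

lemma isPath_single {e : G.E} {u v : G.V} (h : G.IsPath [e] u v) :
    u = G.o e ∧ v = G.t e := by
  rcases h.2 with ⟨h, _⟩ | ⟨_, h1, h2⟩
  · simp at h
  · simpa using ⟨h1, h2⟩

lemma isPath_pair {e f : G.E} {u v : G.V} (h : G.IsPath [e, f] u v) :
    u = G.o e ∧ v = G.t f ∧ G.t e = G.o f := by
  have hc := List.isChain_cons_cons.mp h.1
  rcases h.2 with ⟨h, _⟩ | ⟨_, h1, h2⟩
  · simp at h
  · exact ⟨by simpa using h1, by simpa using h2, hc.1⟩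

section Hyps

variable (hnl : G.NoLoops) (hqa : G.QuasiAcyclic) (hpb : G.TwoPathBounded)
  (hme : ¬ G.HasMultipleEdges) (htr : ¬ G.HasTriangle)

include hnl hpb

/-- No three consecutive composable edges. -/
lemma noThree {e f g : G.E} (h1 : G.t e = G.o f) (h2 : G.t f = G.o g) : False := by
  have := hpb [e, f, g] (G.o e) (G.t g) (isPath_three h1 h2) (fun e _ => hnl e)
  simp at this

include hqa in
omit hpb in
/-- No 2-cycles. -/
lemma noClosed2 {e f : G.E} (h1 : G.t e = G.o f) (h2 : G.t f = G.o e) : False := by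
  refine hqa (G.o e) (G.t e) (fun h => hnl e h) [e] [f] (isPath_one e) ?_
  have := isPath_one (G := G) f
  rwa [← h1, h2] at this

include hqa hme htr in
/-- Classification of pairs of coinciding paths. -/
lemma path_cases {p₁ p₂ : List G.E} {u v : G.V}
    (h₁ : G.IsPath p₁ u v) (h₂ : G.IsPath p₂ u v) :
    p₁ = p₂ ∨
    (∃ A B C D : G.E, G.IsRhomboid (A, B, C, D) ∧ p₁ = [A, B] ∧ p₂ = [C, D]) ∨
    (∃ A B C D : G.E, G.IsRhomboid (A, B, C, D) ∧ p₂ = [A, B] ∧ p₁ = [C, D]) := by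
  have hl₁ : p₁.length ≤ 2 := hpb p₁ u v h₁ (fun e _ => hnl e)
  have hl₂ : p₂.length ≤ 2 := hpb p₂ u v h₂ (fun e _ => hnl e)
  -- helper for the (1,2) triangle case
  have tri : ∀ {e f g : G.E} {u' v' : G.V}, G.IsPath [e] u' v' → G.IsPath [f, g] u' v' → False := by
    intro e f g u' v' he hfg
    obtain ⟨hu1, hv1⟩ := isPath_single he
    obtain ⟨hu2, hv2, hc⟩ := isPath_pair hfg
    exact htr ⟨e, f, g, hu1 ▸ hu2, hc, by rw [← hv2, hv1], hnl e, hnl f, hnl g⟩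
  have cyc02 : ∀ {e f : G.E} {u' v' : G.V}, u' = v' → G.IsPath [e, f] u' v' → False := by
    intro e f u' v' huv h
    obtain ⟨hu, hv, hc⟩ := isPath_pair h
    exact noClosed2 hnl hqa hc (by rw [← hu, huv, hv])
  have cyc01 : ∀ {e : G.E} {u' v' : G.V}, u' = v' → G.IsPath [e] u' v' → False := by
    intro e u' v' huv h
    obtain ⟨hu, hv⟩ := isPath_single h
    exact hnl e (by rw [← hu, huv, hv])
  match p₁, hl₁, p₂, hl₂ with
  | [], _, [] , _ => exact Or.inl rfl
  | [], _, [e], _ => exact (cyc01 (isPath_nil_eq h₁) h₂).elim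
  | [e], _, [], _ => exact (cyc01 (isPath_nil_eq h₂) h₁).elim
  | [], _, [e, f], _ => exact (cyc02 (isPath_nil_eq h₁) h₂).elim
  | [e, f], _, [], _ => exact (cyc02 (isPath_nil_eq h₂) h₁).elim
  | [e], _, [f], _ => {
      obtain ⟨hu1, hv1⟩ := isPath_single h₁
      obtain ⟨hu2, hv2⟩ := isPath_single h₂
      by_cases hef : e = f
      · exact Or.inl (by rw [hef])
      · exact absurd (⟨e, f, hef, by rw [← hv1, hv2], by rw [← hu1, hu2],
          fun h => hnl e h.symm⟩ : G.HasMultipleEdges) hme }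
  | [e], _, [f, g], _ => exact (tri h₁ h₂).elim
  | [e, f], _, [g], _ => exact (tri h₂ h₁).elim
  | [e, f], _, [g, h], _ => {
      obtain ⟨hu1, hv1, hc1⟩ := isPath_pair h₁
      obtain ⟨hu2, hv2, hc2⟩ := isPath_pair h₂
      by_cases heg : e = g
      · subst heg
        by_cases hfh : f = h
        · exact Or.inl (by rw [hfh])
        · exact absurd (⟨f, h, hfh, by rw [← hv1, hv2], by rw [← hc1, hc2],
            fun hh => hnl f hh.symm⟩ : G.HasMultipleEdges) hme
      · -- rhomboid case
        have hoeg : G.o e = G.o g := by rw [← hu1, hu2]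
        have hfh' : G.t f = G.t h := by rw [← hv1, hv2]
        have hteg : G.t e ≠ G.t g := by
          intro hh
          exact hme ⟨e, g, heg, hh, hoeg, fun h' => hnl e h'.symm⟩
        refine Or.inr (Or.inl ⟨e, f, g, h, ?_, rfl, rfl⟩)
        refine ⟨hoeg, hfh', hc1, hc2, hnl e, ?_, ?_, ?_, ?_, hnl h⟩
        · -- o e ≠ o h  (o h = t g)
          intro hh; exact hnl g (by rw [← hoeg, hh, hc2])
        · -- o e ≠ t h  (else u = v, closed)
          intro hh
          exact cyc02 (by rw [hu1, hh, ← hv2]) h₁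
        · -- t e ≠ o h (= t g)
          intro hh; exact hteg (by rw [hh, ← hc2])
        · -- t e ≠ t h  (else triangle e | g h)
          intro hh
          exact htr ⟨e, g, h, hoeg, hc2, hh.symm, hnl e, hnl g, hnl h⟩ }

end Hyps

end NuAux
namespace NuAux

open OrientedGraph FreeMonoid

variable {G : OrientedGraph}

/-! ### Edge types -/

/-- `e` can be preceded. -/
def Pre (G : OrientedGraph) (e : G.E) : Prop := ∃ f, G.t f = G.o e

/-- `e` can be followed. -/
def Fol (G : OrientedGraph) (e : G.E) : Prop := ∃ f, G.t e = G.o f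

lemma not_pre_of_fol (hnl : G.NoLoops) (hpb : G.TwoPathBounded) {e : G.E}
    (h : Fol G e) : ¬ Pre G e := fun ⟨x, hx⟩ => h.elim fun y hy => noThree hnl hpb hx hy

/-! ### Boundary compatibility relation -/

/-- Heads compatible. -/
def HOk (G : OrientedGraph) (s s' : List G.E) : Prop :=
  s.head? = s'.head? ∨ ((∀ e ∈ s.head?, ¬ Pre G e) ∧ (∀ e ∈ s'.head?, ¬ Pre G e))

/-- Lasts compatible. -/
def LOk (G : OrientedGraph) (s s' : List G.E) : Prop :=
  s.getLast? = s'.getLast? ∨ ((∀ e ∈ s.getLast?, ¬ Fol G e) ∧ (∀ e ∈ s'.getLast?, ¬ Fol G e))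

/-- Full boundary compatibility. -/
def Bl (G : OrientedGraph) (s s' : List G.E) : Prop :=
  (s = [] ↔ s' = []) ∧ HOk G s s' ∧ LOk G s s'

lemma Bl_refl (s : List G.E) : Bl G s s := ⟨Iff.rfl, Or.inl rfl, Or.inl rfl⟩

lemma Bl_symm {s s' : List G.E} (h : Bl G s s') : Bl G s' s := by
  obtain ⟨h0, h1, h2⟩ := h
  exact ⟨h0.symm, h1.imp Eq.symm And.symm, h2.imp Eq.symm And.symm⟩

lemma Bl_trans {s s' s'' : List G.E} (h : Bl G s s') (h' : Bl G s' s'') : Bl G s s'' := by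
  obtain ⟨h0, h1, h2⟩ := h
  obtain ⟨h0', h1', h2'⟩ := h'
  refine ⟨h0.trans h0', ?_, ?_⟩
  · rcases h1 with h1 | ⟨ha, hb⟩
    · rcases h1' with h1' | ⟨ha', hb'⟩
      · exact Or.inl (h1.trans h1')
      · exact Or.inr ⟨by rw [h1]; exact ha', hb'⟩
    · rcases h1' with h1' | ⟨ha', hb'⟩
      · exact Or.inr ⟨ha, by rw [← h1']; exact hb⟩
      · exact Or.inr ⟨ha, hb'⟩
  · rcases h2 with h2 | ⟨ha, hb⟩
    · rcases h2' with h2' | ⟨ha', hb'⟩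
      · exact Or.inl (h2.trans h2')
      · exact Or.inr ⟨by rw [h2]; exact ha', hb'⟩
    · rcases h2' with h2' | ⟨ha', hb'⟩
      · exact Or.inr ⟨ha, by rw [← h2']; exact hb⟩
      · exact Or.inr ⟨ha, hb'⟩

lemma Bl_append {s s' t t' : List G.E} (h : Bl G s s') (h' : Bl G t t') :
    Bl G (s ++ t) (s' ++ t') := by
  obtain ⟨h0, h1, h2⟩ := h
  obtain ⟨h0', h1', h2'⟩ := h'
  refine ⟨by simp [h0, h0'], ?_, ?_⟩
  · cases s with
    | nil =>
      have : s' = [] := h0.mp rfl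
      subst this
      simpa using h1'
    | cons e s0 =>
      cases s' with
      | nil => exact absurd (h0.mpr rfl) (by simp)
      | cons e' s0' => simpa [HOk] using h1
  · cases t with
    | nil =>
      have : t' = [] := h0'.mp rfl
      subst this
      simpa using h2
    | cons f t0 =>
      cases t' with
      | nil => exact absurd (h0'.mpr rfl) (by simp)
      | cons f' t0' =>
        rw [LOk, List.getLast?_append_of_ne_nil _ (by simp),
          List.getLast?_append_of_ne_nil _ (by simp)]
        exact h2'

/-! ### The counting function -/

open Classical in
/-- `±1` weight of an adjacent pair relative to the target pairs `P`, `Q`. -/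
noncomputable def dlt (P Q x : G.E × G.E) : ℤ :=
  if x = P then 1 else if x = Q then -1 else 0

/-- Weighted count of adjacent pairs. -/
noncomputable def Jl (P Q : G.E × G.E) : List G.E → ℤ
  | [] => 0
  | [_] => 0
  | e :: f :: t => dlt P Q (e, f) + Jl P Q (f :: t)

/-- Junction weight. -/
noncomputable def dOpt (P Q : G.E × G.E) : Option G.E → Option G.E → ℤ
  | some f, some e => dlt P Q (f, e)
  | _, _ => 0

lemma Jl_append (P Q : G.E × G.E) :
    ∀ s t : List G.E, Jl P Q (s ++ t) = Jl P Q s + Jl P Q t + dOpt P Q s.getLast? t.head?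
  | [], t => by simp [Jl, dOpt]
  | [e], t => by
    cases t with
    | nil => simp [Jl, dOpt]
    | cons f t0 => simp [Jl, dOpt]; ring
  | e :: f :: s0, t => by
    have ih := Jl_append P Q (f :: s0) t
    show dlt P Q (e, f) + Jl P Q (f :: s0 ++ t) = _
    rw [ih, List.getLast?_cons_cons]
    show _ = dlt P Q (e, f) + Jl P Q (f :: s0) + _ + dOpt P Q (f :: s0).getLast? _
    ring

lemma dOpt_eq_zero_left (P Q : G.E × G.E) (hP : Fol G P.1) (hQ : Fol G Q.1)
    {x : Option G.E} (hx : ∀ e ∈ x, ¬ Fol G e) (y : Option G.E) : dOpt P Q x y = 0 := by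
  cases x with
  | none => cases y <;> rfl
  | some f =>
    cases y with
    | none => rfl
    | some e =>
      have hf : ¬ Fol G f := hx f rfl
      show dlt P Q (f, e) = 0
      rw [dlt, if_neg, if_neg]
      · intro h; exact hf (by rw [show f = Q.1 from congrArg Prod.fst h]; exact hQ)
      · intro h; exact hf (by rw [show f = P.1 from congrArg Prod.fst h]; exact hP)

lemma dOpt_eq_zero_right (P Q : G.E × G.E) (hP : Pre G P.2) (hQ : Pre G Q.2)
    (x : Option G.E) {y : Option G.E} (hy : ∀ e ∈ y, ¬ Pre G e) : dOpt P Q x y = 0 := by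
  cases x with
  | none => cases y <;> rfl
  | some f =>
    cases y with
    | none => rfl
    | some e =>
      have he : ¬ Pre G e := hy e rfl
      show dlt P Q (f, e) = 0
      rw [dlt, if_neg, if_neg]
      · intro h; exact he (by rw [show e = Q.2 from congrArg Prod.snd h]; exact hQ)
      · intro h; exact he (by rw [show e = P.2 from congrArg Prod.snd h]; exact hP)

lemma dOpt_congr (P Q : G.E × G.E) (hP1 : Fol G P.1) (hQ1 : Fol G Q.1)
    (hP2 : Pre G P.2) (hQ2 : Pre G Q.2) {s s' t t' : List G.E}
    (hL : LOk G s s') (hH : HOk G t t') :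
    dOpt P Q s.getLast? t.head? = dOpt P Q s'.getLast? t'.head? := by
  rcases hL with hL | ⟨ha, hb⟩
  · rw [hL]
    rcases hH with hH | ⟨hc, hd⟩
    · rw [hH]
    · rw [dOpt_eq_zero_right P Q hP2 hQ2 _ hc, dOpt_eq_zero_right P Q hP2 hQ2 _ hd]
  · rw [dOpt_eq_zero_left P Q hP1 hQ1 ha, dOpt_eq_zero_left P Q hP1 hQ1 hb]

end NuAux
namespace NuAux

open OrientedGraph FreeMonoid

variable {G : OrientedGraph}

/-! ### Adjacent pairs of a sequence -/

/-- The list of adjacent pairs of a sequence. -/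
def adj : List G.E → List (G.E × G.E)
  | [] => []
  | [_] => []
  | e :: f :: t => (e, f) :: adj (f :: t)

/-- Junction pair(s). -/
def jn (s t : List G.E) : List (G.E × G.E) :=
  match s.getLast?, t.head? with
  | some e, some f => [(e, f)]
  | _, _ => []

lemma adj_append : ∀ s t : List G.E, adj (s ++ t) = adj s ++ jn s t ++ adj t
  | [], t => by simp [adj, jn]
  | [e], t => by
    cases t with
    | nil => simp [adj, jn]
    | cons f t0 => simp [adj, jn]
  | e :: f :: s0, t => by
    have ih := adj_append (f :: s0) t
    show (e, f) :: adj (f :: s0 ++ t) = _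
    rw [ih]
    show _ = ((e, f) :: adj (f :: s0)) ++ jn (e :: f :: s0) t ++ adj t
    have : jn (e :: f :: s0) t = jn (f :: s0) t := by
      rw [jn, jn, List.getLast?_cons_cons]
    rw [this]
    simp

lemma jn_length_le (s t : List G.E) : (jn s t).length ≤ 1 := by
  rw [jn]
  rcases s.getLast? with _ | e <;> rcases t.head? with _ | f <;> simp

lemma Jl_eq_zero {P Q : G.E × G.E} : ∀ {s : List G.E}, P ∉ adj s → Q ∉ adj s → Jl P Q s = 0
  | [], _, _ => rfl
  | [_], _, _ => rfl
  | e :: f :: t, hP, hQ => by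
    have h1 : P ∉ adj (f :: t) := fun h => hP (by rw [adj]; exact List.mem_cons_of_mem _ h)
    have h2 : Q ∉ adj (f :: t) := fun h => hQ (by rw [adj]; exact List.mem_cons_of_mem _ h)
    have hne1 : (e, f) ≠ P := fun h => hP (by rw [adj, ← h]; exact List.mem_cons_self)
    have hne2 : (e, f) ≠ Q := fun h => hQ (by rw [adj, ← h]; exact List.mem_cons_self)
    show dlt P Q (e, f) + Jl P Q (f :: t) = 0
    rw [Jl_eq_zero h1 h2, dlt, if_neg hne1, if_neg hne2]
    ring

/-! ### Congruences on the free monoid -/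

/-- The boundary-compatibility congruence. -/
def Bcon (G : OrientedGraph) : Con (FreeMonoid G.E) where
  r x y := Bl G x.toList y.toList
  iseqv := ⟨fun _ => Bl_refl _, Bl_symm, Bl_trans⟩
  mul' h h' := by
    show Bl G (toList (_ * _)) (toList (_ * _))
    rw [toList_mul, toList_mul]
    exact Bl_append h h'

/-- The boundary-and-count congruence associated to target pairs `P`, `Q`. -/
noncomputable def Qcon (G : OrientedGraph) (P Q : G.E × G.E) (hP1 : Fol G P.1)
    (hQ1 : Fol G Q.1) (hP2 : Pre G P.2) (hQ2 : Pre G Q.2) : Con (FreeMonoid G.E) where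
  r x y := Bl G x.toList y.toList ∧ Jl P Q x.toList = Jl P Q y.toList
  iseqv := ⟨fun _ => ⟨Bl_refl _, rfl⟩, fun h => ⟨Bl_symm h.1, h.2.symm⟩,
    fun h h' => ⟨Bl_trans h.1 h'.1, h.2.trans h'.2⟩⟩
  mul' := by
    rintro w x y z ⟨hB1, hJ1⟩ ⟨hB2, hJ2⟩
    show Bl G (toList (w * y)) (toList (x * z)) ∧ _
    refine ⟨by rw [toList_mul, toList_mul]; exact Bl_append hB1 hB2, ?_⟩
    rw [toList_mul, toList_mul, Jl_append, Jl_append, hJ1, hJ2,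
      dOpt_congr P Q hP1 hQ1 hP2 hQ2 hB1.2.2 hB2.2.1]

/-- Rhomboid relation pairs, on the free monoid. -/
def RHfm (G : OrientedGraph) : FreeMonoid G.E → FreeMonoid G.E → Prop :=
  fun x y => ∃ A B C D : G.E, G.IsRhomboid (A, B, C, D) ∧
    x = ofList [A, B] ∧ y = ofList [C, D]

/-- Rhomboid generators satisfy boundary compatibility. -/
lemma rhfm_le_Bcon (hnl : G.NoLoops) (hpb : G.TwoPathBounded) :
    conGen (RHfm G) ≤ Bcon G := by
  refine Con.conGen_le.mpr ?_
  rintro x y ⟨A, B, C, D, hrh, rfl, rfl⟩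
  obtain ⟨h1, h2, h3, h4, _⟩ := hrh
  have hA : ¬ Pre G A := not_pre_of_fol hnl hpb ⟨B, h3⟩
  have hC : ¬ Pre G C := not_pre_of_fol hnl hpb ⟨D, h4⟩
  have hB : ¬ Fol G B := fun ⟨g, hg⟩ => noThree hnl hpb h3 hg
  have hD : ¬ Fol G D := fun ⟨g, hg⟩ => noThree hnl hpb h4 hg
  show Bl G (ofList [A, B]).toList (ofList [C, D]).toList
  rw [toList_ofList, toList_ofList]
  refine ⟨by simp, Or.inr ⟨?_, ?_⟩, Or.inr ⟨?_, ?_⟩⟩ <;> intro e he <;>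
    simp only [List.head?_cons, List.getLast?_cons_cons, List.getLast?_singleton,
      Option.mem_def, Option.some.injEq] at he <;> subst he
  · exact hA
  · exact hC
  · exact hB
  · exact hD

/-! ### Quotient labelings -/

/-- The label product of the canonical labeling into a quotient monoid. -/
lemma labelProd_quot (c : Con (FreeMonoid G.E)) (s : List G.E) :
    G.labelProd (fun e => ((of e : FreeMonoid G.E) : c.Quotient)) s
      = ((ofList s : FreeMonoid G.E) : c.Quotient) := by
  induction s with
  | nil => rw [labelProd]; simp [ofList_nil]
  | cons e t ih =>
    rw [labelProd, List.map_cons, List.prod_cons]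
    rw [labelProd] at ih
    rw [ih, ← Con.coe_mul]
    rfl

/-- The canonical labeling into the universal "rhomboid" quotient is commutative. -/
lemma lstar_comm (hnl : G.NoLoops) (hqa : G.QuasiAcyclic) (hpb : G.TwoPathBounded)
    (hme : ¬ G.HasMultipleEdges) (htr : ¬ G.HasTriangle) :
    G.IsCommutative (fun e => ((of e : FreeMonoid G.E) : (conGen (RHfm G)).Quotient)) := by
  intro u v p₁ p₂ h₁ h₂
  rw [labelProd_quot, labelProd_quot]
  rcases path_cases hnl hqa hpb hme htr h₁ h₂ with rfl | ⟨A, B, C, D, hrh, rfl, rfl⟩ |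
    ⟨A, B, C, D, hrh, rfl, rfl⟩
  · rfl
  · exact (Con.eq _).mpr (ConGen.Rel.of _ _ ⟨A, B, C, D, hrh, rfl, rfl⟩)
  · exact ((Con.eq _).mpr (ConGen.Rel.of _ _ ⟨A, B, C, D, hrh, rfl, rfl⟩)).symm

end NuAux
namespace NuAux

open OrientedGraph FreeMonoid

variable {G : OrientedGraph}

/-- Main structural claim: any complete system of relations must contain a sequence
in which the top pair or the bottom pair of any given rhomboid occurs adjacently. -/
lemma claimA (hnl : G.NoLoops) (hqa : G.QuasiAcyclic) (hpb : G.TwoPathBounded)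
    (hme : ¬ G.HasMultipleEdges) (htr : ¬ G.HasTriangle)
    {R : Finset (List G.E × List G.E)} (hc : G.IsComplete R)
    {A B C D : G.E} (hrh : G.IsRhomboid (A, B, C, D)) :
    ∃ s ∈ G.relSet R, (A, B) ∈ adj s ∨ (C, D) ∈ adj s := by
  by_contra hav
  push_neg at hav
  obtain ⟨h1, h2, h3, h4, h5, h6, h7, h8, h9, h10⟩ := hrh
  dsimp only at h1 h2 h3 h4 h5 h6 h7 h8 h9 h10
  have hAC : A ≠ C := fun h => h8 (by rw [h, h4])
  have hP1 : Fol G A := ⟨B, h3⟩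
  have hQ1 : Fol G C := ⟨D, h4⟩
  have hP2 : Pre G B := ⟨A, h3⟩
  have hQ2 : Pre G D := ⟨C, h4⟩
  set Rfm : FreeMonoid G.E → FreeMonoid G.E → Prop :=
    fun x y => ∃ r ∈ R, x = ofList r.1 ∧ y = ofList r.2 with hRfm
  set l₂ : G.E → (conGen Rfm).Quotient := fun e => ((of e : FreeMonoid G.E) : _) with hl₂
  have hrel : ∀ r ∈ R, G.labelProd l₂ r.1 = G.labelProd l₂ r.2 := by
    intro r hr
    rw [hl₂, labelProd_quot, labelProd_quot]
    exact (Con.eq _).mpr (ConGen.Rel.of _ _ ⟨r, hr, rfl, rfl⟩)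
  have hcomm := (hc _ l₂).mpr hrel
  have hpAB : G.IsPath [A, B] (G.o A) (G.t B) := isPath_two h3
  have hpCD : G.IsPath [C, D] (G.o A) (G.t B) := by
    have := isPath_two (G := G) h4
    rwa [← h1, ← h2] at this
  have heq := hcomm (G.o A) (G.t B) [A, B] [C, D] hpAB hpCD
  rw [hl₂, labelProd_quot, labelProd_quot] at heq
  have hrelAB : (conGen Rfm) (ofList [A, B]) (ofList [C, D]) := (Con.eq _).mp heq
  -- build the invariant congruence
  have hle : conGen Rfm ≤ Qcon G (A, B) (C, D) hP1 hQ1 hP2 hQ2 := by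
    refine Con.conGen_le.mpr ?_
    rintro x y ⟨r, hr, rfl, rfl⟩
    have hstar := (hc _ (fun e => ((of e : FreeMonoid G.E) : (conGen (RHfm G)).Quotient))).mp
      (lstar_comm hnl hqa hpb hme htr) r hr
    rw [labelProd_quot, labelProd_quot] at hstar
    have hBc : (Bcon G) (ofList r.1) (ofList r.2) :=
      rhfm_le_Bcon hnl hpb ((Con.eq _).mp hstar)
    have hB : Bl G r.1 r.2 := by
      have : Bl G (toList (ofList r.1)) (toList (ofList r.2)) := hBc
      rwa [toList_ofList, toList_ofList] at this
    have hJ1 := Jl_eq_zero (P := (A, B)) (Q := (C, D))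
      (hav r.1 ⟨r, hr, Or.inl rfl⟩).1 (hav r.1 ⟨r, hr, Or.inl rfl⟩).2
    have hJ2 := Jl_eq_zero (P := (A, B)) (Q := (C, D))
      (hav r.2 ⟨r, hr, Or.inr rfl⟩).1 (hav r.2 ⟨r, hr, Or.inr rfl⟩).2
    refine ⟨?_, ?_⟩
    · rw [toList_ofList, toList_ofList]; exact hB
    · rw [toList_ofList, toList_ofList, hJ1, hJ2]
  have hfin := (hle hrelAB).2
  rw [toList_ofList, toList_ofList] at hfin
  have e1 : Jl (A, B) (C, D) [A, B] = 1 := by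
    show dlt (A, B) (C, D) (A, B) + Jl (A, B) (C, D) [B] = 1
    rw [dlt, if_pos rfl]; rfl
  have e2 : Jl (A, B) (C, D) [C, D] = -1 := by
    show dlt (A, B) (C, D) (C, D) + Jl (A, B) (C, D) [D] = -1
    rw [dlt, if_neg (fun h => hAC (congrArg Prod.fst h).symm), if_pos rfl]; rfl
  rw [e1, e2] at hfin
  exact absurd hfin (by norm_num)

end NuAux
namespace NuAux

open OrientedGraph FreeMonoid

variable {G : OrientedGraph}

/-- Along a multiplication chain, the set of adjacent pairs occurring in the
sequences grows by at most one pair per step. -/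
lemma chain_bound {f : ℕ → Set (List G.E)} (hf0 : f 0 = G.baseSet) :
    ∀ n : ℕ, (∀ i < n, G.MulStep (f i) (f (i + 1))) →
      ∃ Qs : Finset (G.E × G.E), Qs.card ≤ n ∧ ∀ s ∈ f n, ∀ x ∈ adj s, x ∈ Qs := by
  classical
  intro n
  induction n with
  | zero =>
    intro _
    refine ⟨∅, Nat.le_refl 0, ?_⟩
    intro s hs x hx
    rw [hf0] at hs
    rcases hs with h | ⟨e, h⟩ <;> subst h <;> simp [adj] at hx
  | succ n ih =>
    intro hstep
    obtain ⟨Qs, hcard, hQ⟩ := ih (fun i hi => hstep i (Nat.lt_succ_of_lt hi))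
    obtain ⟨s₀, hs₀, s₁, hs₁, hf⟩ := hstep n (Nat.lt_succ_self n)
    refine ⟨Qs ∪ (jn s₀ s₁).toFinset, ?_, ?_⟩
    · refine le_trans (Finset.card_union_le _ _) ?_
      have := le_trans (List.toFinset_card_le (jn s₀ s₁)) (jn_length_le s₀ s₁)
      omega
    · intro s hs x hx
      rw [hf] at hs
      rcases hs with hs | hs
      · exact Finset.mem_union_left _ (hQ s hs x hx)
      · have hss : s = s₀ ++ s₁ := hs
        subst hss
        rw [adj_append] at hx
        rcases List.mem_append.mp hx with hx | hx
        · rcases List.mem_append.mp hx with hx | hx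
          · exact Finset.mem_union_left _ (hQ s₀ hs₀ x hx)
          · exact Finset.mem_union_right _ (List.mem_toFinset.mpr hx)
        · exact Finset.mem_union_left _ (hQ s₁ hs₁ x hx)

/-- The main bound: the cardinality of a pairwise disjoint family of rhomboids is at most
the length of any multiplication chain producing a superset of a complete system. -/
lemma card_le_chain (hnl : G.NoLoops) (hqa : G.QuasiAcyclic) (hpb : G.TwoPathBounded)
    (hme : ¬ G.HasMultipleEdges) (htr : ¬ G.HasTriangle)
    {R : Finset (List G.E × List G.E)} (hcR : G.IsComplete R)
    {S : Set (List G.E)} (hSR : G.relSet R ⊆ S)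
    {f : ℕ → Set (List G.E)} {n : ℕ} (hf0 : f 0 = G.baseSet) (hfn : f n = S)
    (hstep : ∀ i < n, G.MulStep (f i) (f (i + 1)))
    {F : Finset (G.E × G.E × G.E × G.E)} (hF1 : ∀ r ∈ F, G.IsRhomboid r)
    (hF2 : ∀ r ∈ F, ∀ r' ∈ F, r ≠ r' → G.RhDisjoint r r') :
    F.card ≤ n := by
  classical
  obtain ⟨Qs, hcard, hQ⟩ := chain_bound hf0 n hstep
  refine le_trans (Finset.card_le_card_of_injOn
    (fun ρ => if (ρ.1, ρ.2.1) ∈ Qs then (ρ.1, ρ.2.1) else (ρ.2.2.1, ρ.2.2.2)) ?_ ?_) hcard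
  · intro ρ hρ
    have hrh : G.IsRhomboid (ρ.1, ρ.2.1, ρ.2.2.1, ρ.2.2.2) := hF1 ρ hρ
    obtain ⟨s, hsR, hor⟩ := claimA hnl hqa hpb hme htr hcR hrh
    have hsS : s ∈ f n := by rw [hfn]; exact hSR hsR
    show (if (ρ.1, ρ.2.1) ∈ Qs then (ρ.1, ρ.2.1) else (ρ.2.2.1, ρ.2.2.2)) ∈ Qs
    rcases hor with h | h
    · rw [if_pos (hQ s hsS _ h)]; exact hQ s hsS _ h
    · by_cases hmem : (ρ.1, ρ.2.1) ∈ Qs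
      · rw [if_pos hmem]; exact hmem
      · rw [if_neg hmem]; exact hQ s hsS _ h
  · intro ρ hρ ρ' hρ' heq
    by_contra hne
    obtain ⟨d1, d2, d3, d4⟩ := hF2 ρ (Finset.mem_coe.mp hρ) ρ' (Finset.mem_coe.mp hρ') hne
    dsimp only at heq
    split_ifs at heq <;> rw [Prod.ext_iff] at heq <;> tauto

end NuAux

/-- Theorem: if `G` is quasi-acyclic, 2-path-bounded, without loops, multiple edges
and triangles, then `ν(G) ≥ 𝔯𝔥(G)`. -/
theorem nu_ge_rhNum_of_noLoops (G : OrientedGraph) (hnl : G.NoLoops) (hqa : G.QuasiAcyclic)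
    (hpb : G.TwoPathBounded) (hme : ¬ G.HasMultipleEdges) (htr : ¬ G.HasTriangle) :
    (G.rhNum : ℕ∞) ≤ G.nu := by
  rw [OrientedGraph.nu]
  refine le_sInf ?_
  rintro k ⟨R, hcR, rfl⟩
  rw [OrientedGraph.mRel]
  refine le_sInf ?_
  rintro k ⟨S, hSR, rfl⟩
  rw [OrientedGraph.mCost]
  refine le_sInf ?_
  rintro k ⟨n, rfl, f, hf0, hfn, hstep⟩
  rw [Nat.cast_le]
  rw [OrientedGraph.rhNum]
  refine csSup_le ⟨0, ∅, by simp, by simp, rfl⟩ ?_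
  rintro m ⟨F, hF1, hF2, rfl⟩
  exact NuAux.card_le_chain hnl hqa hpb hme htr hcR hSR hf0 hfn hstep hF1 hF2
end

section
/- Let G = (V, E) be a quasi-acyclic 2-path-bounded oriented graph without loops, multiple edges and triangles. Then for any edge e ∈ E there exists a 3-vanishing commutative diagram D = (G, l) with values in a ring R (viewed as a multiplicative monoid) such that l(e) ≠ 0 and l(e') = 0 for every edge e' ≠ e. -/
lemma isPath_nil_iff (G : OrientedGraph) (u v : G.V) :
    G.IsPath [] u v ↔ u = v := by
  simp [OrientedGraph.IsPath, List.Chain']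

lemma isPath_singleton_iff (G : OrientedGraph) (a : G.E) (u v : G.V) :
    G.IsPath [a] u v ↔ u = G.o a ∧ v = G.t a := by
  simp [OrientedGraph.IsPath, List.Chain']

lemma isPath_pair_iff (G : OrientedGraph) (a b : G.E) (u v : G.V) :
    G.IsPath [a, b] u v ↔ G.t a = G.o b ∧ u = G.o a ∧ v = G.t b := by
  simp [OrientedGraph.IsPath, List.Chain']

/-- Theorem: for a quasi-acyclic, 2-path-bounded graph without loops, multiple edges
and triangles, and any edge `e`, there is a 3-vanishing commutative diagram with values
in a ring such that `l(e) ≠ 0` and `l(e') = 0` for every other edge. -/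
theorem exists_three_vanishing_single_edge (G : OrientedGraph) (hnl : G.NoLoops) (hqa : G.QuasiAcyclic)
    (hpb : G.TwoPathBounded) (hme : ¬ G.HasMultipleEdges) (htr : ¬ G.HasTriangle)
    (e : G.E) :
    ∃ (R : Type) (_ : Ring R) (l : G.E → R),
      G.IsCommutative l ∧
      (∀ e₁ e₂ e₃ : G.E, l e₁ * l e₂ * l e₃ = 0) ∧
      l e ≠ 0 ∧ ∀ e' : G.E, e' ≠ e → l e' = 0 := by
  classical
  set l : G.E → ZMod 8 := fun f => if f = e then 2 else 0 with hl
  refine ⟨ZMod 8, inferInstance, l, ?_, ?_, ?_, ?_⟩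
  · -- commutativity
    intro u v p₁ p₂ h₁ h₂
    -- no nontrivial cycles: a nonempty path from u to u is impossible
    have nocyc : ∀ (p : List G.E) (u : G.V), G.IsPath p u u → p = [] := by
      intro p u hp
      have len := hpb p u u hp (fun f _ => hnl f)
      match p, len with
      | [], _ => rfl
      | [a], _ =>
        rw [isPath_singleton_iff] at hp
        exact absurd (hp.1.symm.trans hp.2) (hnl a)
      | [a, b], _ =>
        rw [isPath_pair_iff] at hp
        exfalso
        refine hqa u (G.t a) ?_ [a] [b] ?_ ?_
        · rw [hp.2.1]; exact hnl a
        · rw [isPath_singleton_iff]; exact ⟨hp.2.1, rfl⟩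
        · rw [isPath_singleton_iff]; exact ⟨hp.1, hp.2.2⟩
    by_cases huv : u = v
    · subst huv
      rw [nocyc p₁ u h₁, nocyc p₂ u h₂]
    -- u ≠ v : both paths nonempty of length 1 or 2
    have len₁ := hpb p₁ u v h₁ (fun f _ => hnl f)
    have len₂ := hpb p₂ u v h₂ (fun f _ => hnl f)
    -- label of a length-2 path is always 0
    have pair0 : ∀ a b : G.E, G.t a = G.o b → l a * l b = 0 := by
      intro a b hab
      by_cases ha : a = e
      · by_cases hb : b = e
        · exact absurd ((hab.trans (congrArg G.o (hb.trans ha.symm))).symm) (hnl a)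
        · simp [hl, hb]
      · simp [hl, ha]
    -- a single edge path compared with a length-2 path : the single edge is not e
    have key : ∀ a b c : G.E, G.IsPath [a] u v → G.IsPath [b, c] u v →
        l a = l b * l c := by
      intro a b c hA hB
      rw [isPath_singleton_iff] at hA
      rw [isPath_pair_iff] at hB
      rw [pair0 b c hB.1]
      by_cases ha : a = e
      · exfalso
        apply htr
        refine ⟨a, b, c, hB.2.1 ▸ hA.1.symm.trans rfl ▸ ?_, hB.1, ?_, hnl a, hnl b, hnl c⟩
        · rw [← hA.1, hB.2.1]
        · rw [← hA.2, hB.2.2]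
      · simp [hl, ha]
    match p₁, len₁, p₂, len₂ with
    | [], _, _, _ => exact absurd ((isPath_nil_iff G u v).mp h₁) huv
    | _, _, [], _ => exact absurd ((isPath_nil_iff G u v).mp h₂) huv
    | [a], _, [b], _ =>
      rw [isPath_singleton_iff] at h₁ h₂
      by_cases hab : a = b
      · rw [hab]
      · exfalso
        apply hme
        exact ⟨a, b, hab, h₁.2.symm.trans h₂.2, h₁.1.symm.trans h₂.1,
          fun h => hnl a h.symm⟩
    | [a], _, [b, c], _ =>
      have := key a b c h₁ h₂
      simpa [OrientedGraph.labelProd] using this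
    | [a, b], _, [c], _ =>
      have := (key c a b h₂ h₁).symm
      simpa [OrientedGraph.labelProd] using this
    | [a, b], _, [c, d], _ =>
      rw [isPath_pair_iff] at h₁ h₂
      have e1 := pair0 a b h₁.1
      have e2 := pair0 c d h₂.1
      simp only [OrientedGraph.labelProd, List.map_cons, List.map_nil,
        List.prod_cons, List.prod_nil, mul_one] at *
      rw [e1, e2]
  · -- 3-vanishing
    intro e₁ e₂ e₃
    simp only [hl]
    split_ifs <;> decide
  · simp only [hl, if_pos rfl]
    decide
  · intro e' he'
    simp [hl, he']
end
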